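/- Let r ≥ 0 and set a = 2 e^{4r} ‖σ‖_{L^p[0,1]}³. There exists a constant c > 0, depending only on r, σ₁, σ₂, such that for every μ ∈ ℂ with Im μ > −r satisfying γ₁(μ) ≤ 1/(2a) and γ₂(μ) ≤ 1/(2a), and for each j ∈ {1,2}: the series z_j = Σ_{n=0}^∞ (−1)ⁿ K_jⁿ e converges absolutely in the supremum norm on [0,1]; its sum z_j is the unique continuous function on [0,1] satisfying z_j(x) + (K_j z_j)(x) = 1 for all x ∈ [0,1]; and sup_{x∈[0,1]} |z_j(x) − 1 + (K_j e)(x)| ≤ c γ̃(μ). -/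

import Mathlib

open MeasureTheory Set
open scoped ENNReal

noncomputable section

/-- The integral operator `K₁` associated with the Dirac system. -/
def K1 (σ₁ σ₂ : ℝ → ℂ) (μ : ℂ) (z : ℝ → ℂ) : ℝ → ℂ := fun x =>
  ∫ t in (0:ℝ)..x, σ₁ t * ∫ s in t..(1:ℝ),
    Complex.exp (2 * Complex.I * μ * (s - t)) * σ₂ s * z s

/-- The integral operator `K₂` associated with the Dirac system. -/
def K2 (σ₁ σ₂ : ℝ → ℂ) (μ : ℂ) (z : ℝ → ℂ) : ℝ → ℂ := fun x =>
  ∫ t in x..(1:ℝ), σ₂ t * ∫ s in (0:ℝ)..t,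
    Complex.exp (2 * Complex.I * μ * (t - s)) * σ₁ s * z s

/-- `γ₀₁(x,μ) = |∫₀ˣ e^{2iμ(x−t)} σ₁(t) dt|`. -/
def gamma01 (σ₁ : ℝ → ℂ) (μ : ℂ) (x : ℝ) : ℝ :=
  ‖∫ t in (0:ℝ)..x, Complex.exp (2 * Complex.I * μ * (x - t)) * σ₁ t‖

/-- `γ₀₂(x,μ) = |∫ₓ¹ e^{2iμ(t−x)} σ₂(t) dt|`. -/
def gamma02 (σ₂ : ℝ → ℂ) (μ : ℂ) (x : ℝ) : ℝ :=
  ‖∫ t in x..(1:ℝ), Complex.exp (2 * Complex.I * μ * (t - x)) * σ₂ t‖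

/-- `γ₁(μ) = ‖γ₀₁(·,μ)‖_{L^q[0,1]}`. -/
def gamma1 (σ₁ : ℝ → ℂ) (q : ℝ≥0∞) (μ : ℂ) : ℝ :=
  (eLpNorm (fun x => gamma01 σ₁ μ x) q (volume.restrict (Icc (0:ℝ) 1))).toReal

/-- `γ₂(μ) = ‖γ₀₂(·,μ)‖_{L^q[0,1]}`. -/
def gamma2 (σ₂ : ℝ → ℂ) (q : ℝ≥0∞) (μ : ℂ) : ℝ :=
  (eLpNorm (fun x => gamma02 σ₂ μ x) q (volume.restrict (Icc (0:ℝ) 1))).toReal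

/-- `γ̃(μ) = ∫₀¹ |σ₂| γ₀₁² + ∫₀¹ |σ₁| γ₀₂²`. -/
def gammaT (σ₁ σ₂ : ℝ → ℂ) (μ : ℂ) : ℝ :=
  (∫ s in (0:ℝ)..1, ‖σ₂ s‖ * (gamma01 σ₁ μ s) ^ 2)
    + ∫ s in (0:ℝ)..1, ‖σ₁ s‖ * (gamma02 σ₂ μ s) ^ 2

/-- `‖σ‖_{L^p[0,1]}` where `σ(x) = max(|σ₁(x)|,|σ₂(x)|)`. -/
def sigmaNorm (σ₁ σ₂ : ℝ → ℂ) (p : ℝ≥0∞) : ℝ :=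
  (eLpNorm (fun x => max ‖σ₁ x‖ ‖σ₂ x‖) p (volume.restrict (Icc (0:ℝ) 1))).toReal

/-- The constant function `1` on `[0,1]`. -/
def eFun : ℝ → ℂ := fun _ => 1

namespace Stmt6Aux

lemma ae_set_eq {A B : Set ℝ} {v : ℝ} (h : ∀ x, x ≠ v → (x ∈ A ↔ x ∈ B)) :
    A =ᵐ[volume] B := by
  rw [MeasureTheory.ae_eq_set]
  constructor
  · refine measure_mono_null (fun x hx => ?_) (Real.volume_singleton (a := v))
    by_contra hxv
    exact hx.2 ((h x hxv).1 hx.1)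
  · refine measure_mono_null (fun x hx => ?_) (Real.volume_singleton (a := v))
    by_contra hxv
    exact hx.2 ((h x hxv).2 hx.1)

/-- Fubini for the triangle `t < s ≤ 1`, `0 < u ≤ s`. -/
lemma swap_tri {F G : ℝ → ℂ} {t : ℝ} (ht0 : 0 ≤ t) (ht1 : t ≤ 1)
    (hF : IntegrableOn F (Icc 0 1) volume) (hG : IntegrableOn G (Icc 0 1) volume) :
    (∫ s in t..1, F s * ∫ u in (0:ℝ)..s, G u)
      = ∫ u in (0:ℝ)..1, G u * ∫ s in max t u..1, F s := by
  have hFI : Integrable F (volume.restrict (Ioc t 1)) :=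
    hF.mono_set (Ioc_subset_Icc_self.trans (Icc_subset_Icc ht0 le_rfl))
  have hGI : Integrable G (volume.restrict (Ioc (0:ℝ) 1)) :=
    hG.mono_set Ioc_subset_Icc_self
  set Q : Set (ℝ × ℝ) := {p : ℝ × ℝ | p.2 < p.1} with hQ
  have hQm : MeasurableSet Q := measurableSet_lt measurable_snd measurable_fst
  have hint : Integrable (Function.uncurry fun s u => Q.indicator (fun p => F p.1 * G p.2) (s, u))
      ((volume.restrict (Ioc t 1)).prod (volume.restrict (Ioc (0:ℝ) 1))) := by
    have h1 : Integrable (fun p : ℝ × ℝ => F p.1 * G p.2)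
        ((volume.restrict (Ioc t 1)).prod (volume.restrict (Ioc (0:ℝ) 1))) :=
      hFI.mul_prod hGI
    have := h1.indicator (s := Q) hQm
    exact this
  have swap := MeasureTheory.integral_integral_swap hint
  -- identify LHS
  have hL : (∫ s in t..1, F s * ∫ u in (0:ℝ)..s, G u)
      = ∫ s, ∫ u, Q.indicator (fun p => F p.1 * G p.2) (s, u)
          ∂(volume.restrict (Ioc (0:ℝ) 1)) ∂(volume.restrict (Ioc t 1)) := by
    rw [intervalIntegral.integral_of_le ht1]
    refine setIntegral_congr_fun measurableSet_Ioc (fun s hs => ?_)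
    have hs0 : (0:ℝ) ≤ s := ht0.trans hs.1.le
    have hind : ∀ u : ℝ, Q.indicator (fun p : ℝ × ℝ => F p.1 * G p.2) (s, u)
        = (Iio s).indicator (fun u => F s * G u) u := by
      intro u
      by_cases h : u < s
      · simp [Set.indicator_of_mem, h, hQ, Set.mem_setOf_eq]
      · simp [Set.indicator_of_notMem, h, hQ, Set.mem_setOf_eq]
    rw [show (fun u => Q.indicator (fun p : ℝ × ℝ => F p.1 * G p.2) (s, u))
        = fun u => (Iio s).indicator (fun u => F s * G u) u from funext hind]
    rw [MeasureTheory.integral_indicator measurableSet_Iio]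
    rw [Measure.restrict_restrict measurableSet_Iio]
    have hset : (Iio s ∩ Ioc (0:ℝ) 1 : Set ℝ) =ᵐ[volume] (Ioc (0:ℝ) s : Set ℝ) := by
      refine ae_set_eq (v := s) (fun x hx => ?_)
      simp only [mem_inter_iff, mem_Iio, mem_Ioc]
      constructor
      · rintro ⟨h1, h2, h3⟩; exact ⟨h2, h1.le⟩
      · rintro ⟨h1, h2⟩; exact ⟨lt_of_le_of_ne h2 hx, h1, h2.trans hs.2⟩
    rw [setIntegral_congr_set hset, ← intervalIntegral.integral_of_le hs0,
      intervalIntegral.integral_const_mul]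
  -- identify RHS
  have hR : (∫ u in (0:ℝ)..1, G u * ∫ s in max t u..1, F s)
      = ∫ u, ∫ s, Q.indicator (fun p => F p.1 * G p.2) (s, u)
          ∂(volume.restrict (Ioc t 1)) ∂(volume.restrict (Ioc (0:ℝ) 1)) := by
    rw [intervalIntegral.integral_of_le (by norm_num : (0:ℝ) ≤ 1)]
    refine setIntegral_congr_fun measurableSet_Ioc (fun u hu => ?_)
    have hind : ∀ s : ℝ, Q.indicator (fun p : ℝ × ℝ => F p.1 * G p.2) (s, u)
        = (Ioi u).indicator (fun s => F s * G u) s := by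
      intro s
      by_cases h : u < s
      · simp [Set.indicator_of_mem, h, hQ, Set.mem_setOf_eq]
      · simp [Set.indicator_of_notMem, h, hQ, Set.mem_setOf_eq]
    rw [show (fun s => Q.indicator (fun p : ℝ × ℝ => F p.1 * G p.2) (s, u))
        = fun s => (Ioi u).indicator (fun s => F s * G u) s from funext hind]
    rw [MeasureTheory.integral_indicator measurableSet_Ioi]
    rw [Measure.restrict_restrict measurableSet_Ioi]
    have hset : Ioi u ∩ Ioc t 1 = Ioc (max t u) 1 := by
      ext x; simp only [mem_inter_iff, mem_Ioi, mem_Ioc, max_lt_iff]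
      tauto
    rw [hset, ← intervalIntegral.integral_of_le (max_le ht1 hu.2),
      intervalIntegral.integral_mul_const, mul_comm]
  rw [hL, hR]
  exact swap

/-- Fubini for the triangle `0 < s ≤ t`, `s < u ≤ 1`. -/
lemma swap_tri2 {F G : ℝ → ℂ} {t : ℝ} (ht0 : 0 ≤ t) (ht1 : t ≤ 1)
    (hF : IntegrableOn F (Icc 0 1) volume) (hG : IntegrableOn G (Icc 0 1) volume) :
    (∫ s in (0:ℝ)..t, F s * ∫ u in s..(1:ℝ), G u)
      = ∫ u in (0:ℝ)..1, G u * ∫ s in (0:ℝ)..min t u, F s := by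
  have hFI : Integrable F (volume.restrict (Ioc (0:ℝ) t)) :=
    hF.mono_set (Ioc_subset_Icc_self.trans (Icc_subset_Icc le_rfl ht1))
  have hGI : Integrable G (volume.restrict (Ioc (0:ℝ) 1)) :=
    hG.mono_set Ioc_subset_Icc_self
  set Q : Set (ℝ × ℝ) := {p : ℝ × ℝ | p.1 < p.2} with hQ
  have hQm : MeasurableSet Q := measurableSet_lt measurable_fst measurable_snd
  have hint : Integrable (Function.uncurry fun s u => Q.indicator (fun p => F p.1 * G p.2) (s, u))
      ((volume.restrict (Ioc (0:ℝ) t)).prod (volume.restrict (Ioc (0:ℝ) 1))) := by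
    have h1 : Integrable (fun p : ℝ × ℝ => F p.1 * G p.2)
        ((volume.restrict (Ioc (0:ℝ) t)).prod (volume.restrict (Ioc (0:ℝ) 1))) :=
      hFI.mul_prod hGI
    have := h1.indicator (s := Q) hQm
    exact this
  have swap := MeasureTheory.integral_integral_swap hint
  have hL : (∫ s in (0:ℝ)..t, F s * ∫ u in s..(1:ℝ), G u)
      = ∫ s, ∫ u, Q.indicator (fun p => F p.1 * G p.2) (s, u)
          ∂(volume.restrict (Ioc (0:ℝ) 1)) ∂(volume.restrict (Ioc (0:ℝ) t)) := by
    rw [intervalIntegral.integral_of_le ht0]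
    refine setIntegral_congr_fun measurableSet_Ioc (fun s hs => ?_)
    have hs1 : s ≤ 1 := hs.2.trans ht1
    have hind : ∀ u : ℝ, Q.indicator (fun p : ℝ × ℝ => F p.1 * G p.2) (s, u)
        = (Ioi s).indicator (fun u => F s * G u) u := by
      intro u
      by_cases h : s < u
      · simp [Set.indicator_of_mem, h, hQ, Set.mem_setOf_eq]
      · simp [Set.indicator_of_notMem, h, hQ, Set.mem_setOf_eq]
    rw [show (fun u => Q.indicator (fun p : ℝ × ℝ => F p.1 * G p.2) (s, u))
        = fun u => (Ioi s).indicator (fun u => F s * G u) u from funext hind]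
    rw [MeasureTheory.integral_indicator measurableSet_Ioi]
    rw [Measure.restrict_restrict measurableSet_Ioi]
    have hset : (Ioi s ∩ Ioc (0:ℝ) 1 : Set ℝ) = (Ioc s 1 : Set ℝ) := by
      ext x; simp only [mem_inter_iff, mem_Ioi, mem_Ioc]
      constructor
      · rintro ⟨h1, _, h3⟩; exact ⟨h1, h3⟩
      · rintro ⟨h1, h2⟩; exact ⟨h1, hs.1.trans h1, h2⟩
    rw [hset, ← intervalIntegral.integral_of_le hs1, intervalIntegral.integral_const_mul]
  have hR : (∫ u in (0:ℝ)..1, G u * ∫ s in (0:ℝ)..min t u, F s)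
      = ∫ u, ∫ s, Q.indicator (fun p => F p.1 * G p.2) (s, u)
          ∂(volume.restrict (Ioc (0:ℝ) t)) ∂(volume.restrict (Ioc (0:ℝ) 1)) := by
    rw [intervalIntegral.integral_of_le (by norm_num : (0:ℝ) ≤ 1)]
    refine setIntegral_congr_fun measurableSet_Ioc (fun u hu => ?_)
    have hind : ∀ s : ℝ, Q.indicator (fun p : ℝ × ℝ => F p.1 * G p.2) (s, u)
        = (Iio u).indicator (fun s => F s * G u) s := by
      intro s
      by_cases h : s < u
      · simp [Set.indicator_of_mem, h, hQ, Set.mem_setOf_eq]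
      · simp [Set.indicator_of_notMem, h, hQ, Set.mem_setOf_eq]
    rw [show (fun s => Q.indicator (fun p : ℝ × ℝ => F p.1 * G p.2) (s, u))
        = fun s => (Iio u).indicator (fun s => F s * G u) s from funext hind]
    rw [MeasureTheory.integral_indicator measurableSet_Iio]
    rw [Measure.restrict_restrict measurableSet_Iio]
    have hset : (Iio u ∩ Ioc (0:ℝ) t : Set ℝ) =ᵐ[volume] (Ioc (0:ℝ) (min t u) : Set ℝ) := by
      refine ae_set_eq (v := u) (fun x hx => ?_)
      simp only [mem_inter_iff, mem_Iio, mem_Ioc, le_min_iff]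
      constructor
      · rintro ⟨h1, h2, h3⟩; exact ⟨h2, h3, h1.le⟩
      · rintro ⟨h1, h2, h3⟩; exact ⟨lt_of_le_of_ne h3 hx, h1, h2⟩
    rw [setIntegral_congr_set hset,
      ← intervalIntegral.integral_of_le (le_min ht0 hu.1.le),
      intervalIntegral.integral_mul_const, mul_comm]
  rw [hL, hR]
  exact swap
/-! ### Basic helpers -/

lemma II {E : Type*} [NormedAddCommGroup E] {f : ℝ → E}
    (hf : IntegrableOn f (Icc (0:ℝ) 1) volume) {a b : ℝ}
    (ha : 0 ≤ a) (hab : a ≤ b) (hb : b ≤ 1) : IntervalIntegrable f volume a b := by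
  apply MeasureTheory.IntegrableOn.intervalIntegrable
  rw [uIcc_of_le hab]
  exact hf.mono_set (Icc_subset_Icc ha hb)

lemma expNormBound {μ : ℂ} {r : ℝ} (hr : 0 ≤ r) (hμ : -r < μ.im) {a b : ℝ}
    (hab : a ≤ b) (hba : b - a ≤ 1) :
    ‖Complex.exp (2 * Complex.I * μ * ((b:ℂ) - (a:ℂ)))‖ ≤ Real.exp (2 * r) := by
  have hre : ((2 : ℂ) * Complex.I * μ * (((b - a : ℝ)) : ℂ)).re = -2 * μ.im * (b - a) := by
    simp [Complex.mul_re, Complex.mul_im]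
    try ring
  rw [Complex.norm_exp]
  have h2 : 0 ≤ b - a := sub_nonneg.2 hab
  have h3 : -μ.im ≤ r := by linarith
  apply Real.exp_le_exp.2
  rw [show ((b:ℂ) - (a:ℂ)) = (((b - a : ℝ)) : ℂ) by push_cast; ring, hre]
  nlinarith [mul_le_mul_of_nonneg_right h3 h2, mul_le_mul_of_nonneg_left hba hr]

lemma expSplit (μ : ℂ) (s t m : ℝ) :
    Complex.exp (2 * Complex.I * μ * ((s:ℂ) - (t:ℂ)))
      = Complex.exp (2 * Complex.I * μ * ((m:ℂ) - (t:ℂ)))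
        * Complex.exp (2 * Complex.I * μ * ((s:ℂ) - (m:ℂ))) := by
  rw [← Complex.exp_add]; congr 1; ring

lemma expSplit0 (μ : ℂ) (s t : ℝ) :
    Complex.exp (2 * Complex.I * μ * ((s:ℂ) - (t:ℂ)))
      = Complex.exp (2 * Complex.I * μ * (-(t:ℂ)))
        * Complex.exp (2 * Complex.I * μ * (s:ℂ)) := by
  rw [← Complex.exp_add]; congr 1; ring

lemma contE (μ : ℂ) : Continuous (fun s : ℝ => Complex.exp (2 * Complex.I * μ * (s:ℂ))) :=
  (continuous_const.mul Complex.continuous_ofReal).cexp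

/-! ### K1 side basic lemmas -/

section K1side

variable {σ₁ σ₂ : ℝ → ℂ} {μ : ℂ} {r : ℝ} {z : ℝ → ℂ}

lemma gInt1 (hi2 : IntegrableOn σ₂ (Icc (0:ℝ) 1) volume)
    (hz : ContinuousOn z (Icc (0:ℝ) 1)) :
    IntegrableOn (fun s : ℝ => Complex.exp (2 * Complex.I * μ * (s:ℂ)) * σ₂ s * z s)
      (Icc (0:ℝ) 1) volume := by
  have h1 : IntegrableOn (fun s : ℝ => Complex.exp (2 * Complex.I * μ * (s:ℂ)) * σ₂ s)
      (Icc (0:ℝ) 1) volume :=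
    IntegrableOn.continuousOn_mul (contE μ).continuousOn hi2 isCompact_Icc
  exact h1.mul_continuousOn hz isCompact_Icc

lemma innerEq1 (σ₂ : ℝ → ℂ) (μ : ℂ) (z : ℝ → ℂ) (t : ℝ) :
    (fun s : ℝ => Complex.exp (2 * Complex.I * μ * ((s:ℂ) - (t:ℂ))) * σ₂ s * z s)
      = fun s : ℝ => Complex.exp (2 * Complex.I * μ * (-(t:ℂ)))
          * (Complex.exp (2 * Complex.I * μ * (s:ℂ)) * σ₂ s * z s) := by
  funext s; rw [expSplit0]; ring

lemma innerII1 (hi2 : IntegrableOn σ₂ (Icc (0:ℝ) 1) volume)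
    (hz : ContinuousOn z (Icc (0:ℝ) 1)) {t a b : ℝ}
    (ha : 0 ≤ a) (hab : a ≤ b) (hb : b ≤ 1) :
    IntervalIntegrable
      (fun s : ℝ => Complex.exp (2 * Complex.I * μ * ((s:ℂ) - (t:ℂ))) * σ₂ s * z s) volume a b := by
  rw [innerEq1]
  exact (II (gInt1 hi2 hz) ha hab hb).const_mul _

lemma innerRep1 (hi2 : IntegrableOn σ₂ (Icc (0:ℝ) 1) volume)
    (hz : ContinuousOn z (Icc (0:ℝ) 1)) {t : ℝ} (ht : t ∈ Icc (0:ℝ) 1) :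
    (∫ s in t..(1:ℝ), Complex.exp (2 * Complex.I * μ * ((s:ℂ) - (t:ℂ))) * σ₂ s * z s)
      = Complex.exp (2 * Complex.I * μ * (-(t:ℂ)))
        * ((∫ s in (0:ℝ)..1, Complex.exp (2 * Complex.I * μ * (s:ℂ)) * σ₂ s * z s)
          - ∫ s in (0:ℝ)..t, Complex.exp (2 * Complex.I * μ * (s:ℂ)) * σ₂ s * z s) := by
  rw [innerEq1, intervalIntegral.integral_const_mul]
  congr 1
  rw [intervalIntegral.integral_interval_sub_left
    (II (gInt1 hi2 hz) le_rfl zero_le_one le_rfl)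
    (II (gInt1 hi2 hz) le_rfl ht.1 ht.2)]

lemma primCont1 (hi2 : IntegrableOn σ₂ (Icc (0:ℝ) 1) volume)
    (hz : ContinuousOn z (Icc (0:ℝ) 1)) :
    ContinuousOn (fun y : ℝ => ∫ s in (0:ℝ)..y,
      Complex.exp (2 * Complex.I * μ * (s:ℂ)) * σ₂ s * z s) (Icc (0:ℝ) 1) := by
  have h := intervalIntegral.continuousOn_primitive_interval
    (a := (0:ℝ)) (b := (1:ℝ)) (μ := volume)
    (f := fun s : ℝ => Complex.exp (2 * Complex.I * μ * (s:ℂ)) * σ₂ s * z s) ?_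
  · rwa [uIcc_of_le zero_le_one] at h
  · rw [uIcc_of_le zero_le_one]; exact gInt1 hi2 hz

lemma innerCont1 (hi2 : IntegrableOn σ₂ (Icc (0:ℝ) 1) volume)
    (hz : ContinuousOn z (Icc (0:ℝ) 1)) :
    ContinuousOn (fun t : ℝ => ∫ s in t..(1:ℝ),
      Complex.exp (2 * Complex.I * μ * ((s:ℂ) - (t:ℂ))) * σ₂ s * z s) (Icc (0:ℝ) 1) := by
  have hc : ContinuousOn (fun t : ℝ => Complex.exp (2 * Complex.I * μ * (-(t:ℂ)))
      * ((∫ s in (0:ℝ)..1, Complex.exp (2 * Complex.I * μ * (s:ℂ)) * σ₂ s * z s)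
        - ∫ s in (0:ℝ)..t, Complex.exp (2 * Complex.I * μ * (s:ℂ)) * σ₂ s * z s))
      (Icc (0:ℝ) 1) := by
    apply ContinuousOn.mul
    · exact ((continuous_const.mul Complex.continuous_ofReal.neg).cexp).continuousOn
    · exact continuousOn_const.sub (primCont1 hi2 hz)
  exact hc.congr (fun t ht => innerRep1 hi2 hz ht)

lemma outerInt1 (hi1 : IntegrableOn σ₁ (Icc (0:ℝ) 1) volume)
    (hi2 : IntegrableOn σ₂ (Icc (0:ℝ) 1) volume)
    (hz : ContinuousOn z (Icc (0:ℝ) 1)) :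
    IntegrableOn (fun t : ℝ => σ₁ t * ∫ s in t..(1:ℝ),
      Complex.exp (2 * Complex.I * μ * ((s:ℂ) - (t:ℂ))) * σ₂ s * z s) (Icc (0:ℝ) 1) volume :=
  hi1.mul_continuousOn (innerCont1 hi2 hz) isCompact_Icc

lemma K1cont (hi1 : IntegrableOn σ₁ (Icc (0:ℝ) 1) volume)
    (hi2 : IntegrableOn σ₂ (Icc (0:ℝ) 1) volume)
    (hz : ContinuousOn z (Icc (0:ℝ) 1)) :
    ContinuousOn (K1 σ₁ σ₂ μ z) (Icc (0:ℝ) 1) := by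
  have h := intervalIntegral.continuousOn_primitive_interval
    (a := (0:ℝ)) (b := (1:ℝ)) (μ := volume)
    (f := fun t : ℝ => σ₁ t * ∫ s in t..(1:ℝ),
      Complex.exp (2 * Complex.I * μ * ((s:ℂ) - (t:ℂ))) * σ₂ s * z s) ?_
  · rw [uIcc_of_le zero_le_one] at h
    exact h
  · rw [uIcc_of_le zero_le_one]; exact outerInt1 hi1 hi2 hz

lemma g02_eq (σ₂ : ℝ → ℂ) (μ : ℂ) (t : ℝ) :
    gamma02 σ₂ μ t = ‖∫ s in t..(1:ℝ),
      Complex.exp (2 * Complex.I * μ * ((s:ℂ) - (t:ℂ))) * σ₂ s * eFun s‖ := by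
  simp only [gamma02, eFun, mul_one]

lemma g02_nn (σ₂ : ℝ → ℂ) (μ : ℂ) (t : ℝ) : 0 ≤ gamma02 σ₂ μ t := by
  simp only [gamma02]; exact norm_nonneg _

lemma g02_cont (hi2 : IntegrableOn σ₂ (Icc (0:ℝ) 1) volume) :
    ContinuousOn (gamma02 σ₂ μ) (Icc (0:ℝ) 1) := by
  have h := (innerCont1 (μ := μ) (z := eFun) hi2 continuous_const.continuousOn).norm
  exact h.congr (fun t _ => g02_eq σ₂ μ t)

lemma g02_max (σ₂ : ℝ → ℂ) (μ : ℂ) (t u : ℝ) :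
    gamma02 σ₂ μ (max t u) ≤ gamma02 σ₂ μ t + gamma02 σ₂ μ u := by
  rcases le_total t u with h | h
  · rw [max_eq_right h]; linarith [g02_nn σ₂ μ t]
  · rw [max_eq_left h]; linarith [g02_nn σ₂ μ u]

lemma innerBound1 (hr : 0 ≤ r) (hμ : -r < μ.im)
    (hi2 : IntegrableOn σ₂ (Icc (0:ℝ) 1) volume)
    (hz : ContinuousOn z (Icc (0:ℝ) 1)) {C : ℝ}
    (hC : ∀ s ∈ Icc (0:ℝ) 1, ‖z s‖ ≤ C) {t : ℝ} (ht : t ∈ Icc (0:ℝ) 1) :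
    ‖∫ s in t..(1:ℝ), Complex.exp (2 * Complex.I * μ * ((s:ℂ) - (t:ℂ))) * σ₂ s * z s‖
      ≤ Real.exp (2*r) * C * (∫ s in (0:ℝ)..1, ‖σ₂ s‖) := by
  have hC0 : 0 ≤ C := le_trans (norm_nonneg _) (hC 0 ⟨le_rfl, zero_le_one⟩)
  calc ‖∫ s in t..(1:ℝ), Complex.exp (2 * Complex.I * μ * ((s:ℂ) - (t:ℂ))) * σ₂ s * z s‖
      ≤ ∫ s in t..(1:ℝ), ‖Complex.exp (2 * Complex.I * μ * ((s:ℂ) - (t:ℂ))) * σ₂ s * z s‖ :=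
        intervalIntegral.norm_integral_le_integral_norm ht.2
    _ ≤ ∫ s in t..(1:ℝ), Real.exp (2*r) * C * ‖σ₂ s‖ := by
        apply intervalIntegral.integral_mono_on ht.2
          ((innerII1 hi2 hz ht.1 ht.2 le_rfl).norm)
          (((II hi2.norm ht.1 ht.2 le_rfl)).const_mul _)
        intro s hs
        rw [norm_mul, norm_mul]
        have h1 : ‖Complex.exp (2 * Complex.I * μ * ((s:ℂ) - (t:ℂ)))‖ ≤ Real.exp (2*r) := by
          have := expNormBound (μ := μ) hr hμ hs.1 (by
            have := ht.1; have := hs.2; linarith)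
          simpa using this
        have h2 : ‖z s‖ ≤ C := hC s ⟨ht.1.trans hs.1, hs.2⟩
        calc ‖Complex.exp (2 * Complex.I * μ * ((s:ℂ) - (t:ℂ)))‖ * ‖σ₂ s‖ * ‖z s‖
            ≤ (Real.exp (2*r) * ‖σ₂ s‖) * C :=
              mul_le_mul (mul_le_mul_of_nonneg_right h1 (norm_nonneg _)) h2
                (norm_nonneg _) (by positivity)
          _ = Real.exp (2*r) * C * ‖σ₂ s‖ := by ring
    _ ≤ ∫ s in (0:ℝ)..1, Real.exp (2*r) * C * ‖σ₂ s‖ := by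
        apply intervalIntegral.integral_mono_interval ht.1 ht.2 le_rfl
        · filter_upwards with s
          positivity
        · exact ((II hi2.norm le_rfl zero_le_one le_rfl)).const_mul _
    _ = Real.exp (2*r) * C * (∫ s in (0:ℝ)..1, ‖σ₂ s‖) := by
        rw [intervalIntegral.integral_const_mul]

lemma K1bound (hr : 0 ≤ r) (hμ : -r < μ.im)
    (hi1 : IntegrableOn σ₁ (Icc (0:ℝ) 1) volume)
    (hi2 : IntegrableOn σ₂ (Icc (0:ℝ) 1) volume)
    (hz : ContinuousOn z (Icc (0:ℝ) 1)) {C : ℝ}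
    (hC : ∀ s ∈ Icc (0:ℝ) 1, ‖z s‖ ≤ C) {x : ℝ} (hx : x ∈ Icc (0:ℝ) 1) :
    ‖K1 σ₁ σ₂ μ z x‖
      ≤ (Real.exp (2*r) * (∫ s in (0:ℝ)..1, ‖σ₁ s‖) * (∫ s in (0:ℝ)..1, ‖σ₂ s‖)) * C := by
  have hC0 : 0 ≤ C := le_trans (norm_nonneg _) (hC 0 ⟨le_rfl, zero_le_one⟩)
  have hSS2 : 0 ≤ ∫ s in (0:ℝ)..1, ‖σ₂ s‖ :=
    intervalIntegral.integral_nonneg zero_le_one (fun s _ => norm_nonneg _)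
  calc ‖K1 σ₁ σ₂ μ z x‖
      ≤ ∫ t in (0:ℝ)..x, ‖σ₁ t * ∫ s in t..(1:ℝ),
          Complex.exp (2 * Complex.I * μ * ((s:ℂ) - (t:ℂ))) * σ₂ s * z s‖ :=
        intervalIntegral.norm_integral_le_integral_norm hx.1
    _ ≤ ∫ t in (0:ℝ)..x, ‖σ₁ t‖ * (Real.exp (2*r) * C * (∫ s in (0:ℝ)..1, ‖σ₂ s‖)) := by
        apply intervalIntegral.integral_mono_on hx.1
          ((II (outerInt1 hi1 hi2 hz) le_rfl hx.1 hx.2).norm)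
          ((II hi1.norm le_rfl hx.1 hx.2).mul_const _)
        intro t ht
        rw [norm_mul]
        apply mul_le_mul_of_nonneg_left _ (norm_nonneg _)
        exact innerBound1 hr hμ hi2 hz hC ⟨ht.1, ht.2.trans hx.2⟩
    _ = (∫ t in (0:ℝ)..x, ‖σ₁ t‖) * (Real.exp (2*r) * C * (∫ s in (0:ℝ)..1, ‖σ₂ s‖)) := by
        rw [intervalIntegral.integral_mul_const]
    _ ≤ (∫ t in (0:ℝ)..1, ‖σ₁ t‖) * (Real.exp (2*r) * C * (∫ s in (0:ℝ)..1, ‖σ₂ s‖)) := by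
        apply mul_le_mul_of_nonneg_right _ (by positivity)
        apply intervalIntegral.integral_mono_interval le_rfl hx.1 hx.2
        · filter_upwards with s
          exact norm_nonneg _
        · exact II hi1.norm le_rfl zero_le_one le_rfl
    _ = (Real.exp (2*r) * (∫ s in (0:ℝ)..1, ‖σ₁ s‖) * (∫ s in (0:ℝ)..1, ‖σ₂ s‖)) * C := by
        ring

lemma K1congr (σ₁ σ₂ : ℝ → ℂ) (μ : ℂ) (z w : ℝ → ℂ)
    (h : ∀ y ∈ Icc (0:ℝ) 1, z y = w y) {x : ℝ} (hx : x ∈ Icc (0:ℝ) 1) :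
    K1 σ₁ σ₂ μ z x = K1 σ₁ σ₂ μ w x := by
  simp only [K1]
  apply intervalIntegral.integral_congr
  intro t ht
  rw [uIcc_of_le hx.1] at ht
  dsimp only
  congr 1
  apply intervalIntegral.integral_congr
  intro s hs
  rw [uIcc_of_le (ht.2.trans hx.2)] at hs
  dsimp only
  rw [h s ⟨ht.1.trans hs.1, hs.2⟩]

lemma K1add (hi1 : IntegrableOn σ₁ (Icc (0:ℝ) 1) volume)
    (hi2 : IntegrableOn σ₂ (Icc (0:ℝ) 1) volume)
    {w : ℝ → ℂ} (hz : ContinuousOn z (Icc (0:ℝ) 1)) (hw : ContinuousOn w (Icc (0:ℝ) 1))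
    (c : ℂ) {x : ℝ} (hx : x ∈ Icc (0:ℝ) 1) :
    K1 σ₁ σ₂ μ (fun y => z y + c * w y) x = K1 σ₁ σ₂ μ z x + c * K1 σ₁ σ₂ μ w x := by
  have hinner : ∀ t ∈ Icc (0:ℝ) 1,
      (∫ s in t..(1:ℝ), Complex.exp (2 * Complex.I * μ * ((s:ℂ) - (t:ℂ))) * σ₂ s
          * (z s + c * w s))
        = (∫ s in t..(1:ℝ), Complex.exp (2 * Complex.I * μ * ((s:ℂ) - (t:ℂ))) * σ₂ s * z s)
          + c * ∫ s in t..(1:ℝ), Complex.exp (2 * Complex.I * μ * ((s:ℂ) - (t:ℂ))) * σ₂ s * w s := by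
    intro t ht
    rw [show (fun s : ℝ => Complex.exp (2 * Complex.I * μ * ((s:ℂ) - (t:ℂ))) * σ₂ s * (z s + c * w s))
        = fun s : ℝ => (Complex.exp (2 * Complex.I * μ * ((s:ℂ) - (t:ℂ))) * σ₂ s * z s)
          + c * (Complex.exp (2 * Complex.I * μ * ((s:ℂ) - (t:ℂ))) * σ₂ s * w s) from
        funext fun s => by ring]
    rw [intervalIntegral.integral_add (innerII1 hi2 hz ht.1 ht.2 le_rfl)
      ((innerII1 hi2 hw ht.1 ht.2 le_rfl).const_mul c),
      intervalIntegral.integral_const_mul]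
  simp only [K1]
  have houter : ∀ t ∈ Icc (0:ℝ) x,
      σ₁ t * (∫ s in t..(1:ℝ), Complex.exp (2 * Complex.I * μ * ((s:ℂ) - (t:ℂ))) * σ₂ s
          * (z s + c * w s))
        = σ₁ t * (∫ s in t..(1:ℝ), Complex.exp (2 * Complex.I * μ * ((s:ℂ) - (t:ℂ))) * σ₂ s * z s)
          + c * (σ₁ t * ∫ s in t..(1:ℝ), Complex.exp (2 * Complex.I * μ * ((s:ℂ) - (t:ℂ))) * σ₂ s * w s) := by
    intro t ht
    rw [hinner t ⟨ht.1, ht.2.trans hx.2⟩]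
    ring
  rw [intervalIntegral.integral_congr (g := fun t =>
      σ₁ t * (∫ s in t..(1:ℝ), Complex.exp (2 * Complex.I * μ * ((s:ℂ) - (t:ℂ))) * σ₂ s * z s)
        + c * (σ₁ t * ∫ s in t..(1:ℝ), Complex.exp (2 * Complex.I * μ * ((s:ℂ) - (t:ℂ))) * σ₂ s * w s))
    (by rw [uIcc_of_le hx.1]; exact houter)]
  rw [intervalIntegral.integral_add (II (outerInt1 hi1 hi2 hz) le_rfl hx.1 hx.2)
    ((II (outerInt1 hi1 hi2 hw) le_rfl hx.1 hx.2).const_mul c),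
    intervalIntegral.integral_const_mul]

lemma K1smul (hi1 : IntegrableOn σ₁ (Icc (0:ℝ) 1) volume)
    (hi2 : IntegrableOn σ₂ (Icc (0:ℝ) 1) volume)
    (hz : ContinuousOn z (Icc (0:ℝ) 1)) (c : ℂ) {x : ℝ} (hx : x ∈ Icc (0:ℝ) 1) :
    K1 σ₁ σ₂ μ (fun y => c * z y) x = c * K1 σ₁ σ₂ μ z x := by
  have h0 : ∀ y ∈ Icc (0:ℝ) 1, c * z y = (fun y : ℝ => (fun _ : ℝ => (0:ℂ)) y + c * z y) y := by
    intro y _; simp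
  rw [K1congr σ₁ σ₂ μ _ _ h0 hx,
    K1add (z := fun _ : ℝ => (0:ℂ)) hi1 hi2 continuous_const.continuousOn hz c hx]
  have hz0 : K1 σ₁ σ₂ μ (fun _ : ℝ => (0:ℂ)) x = 0 := by
    simp [K1]
  rw [hz0]
  ring

end K1side
section K1sq

variable {σ₁ σ₂ : ℝ → ℂ} {μ : ℂ} {r : ℝ} {z : ℝ → ℂ}

lemma Fint1 (hi2 : IntegrableOn σ₂ (Icc (0:ℝ) 1) volume) (t : ℝ) :
    IntegrableOn (fun s : ℝ => Complex.exp (2 * Complex.I * μ * ((s:ℂ) - (t:ℂ))) * σ₂ s)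
      (Icc (0:ℝ) 1) volume := by
  have h1 : IntegrableOn (fun s : ℝ => Complex.exp (2 * Complex.I * μ * (s:ℂ)) * σ₂ s)
      (Icc (0:ℝ) 1) volume :=
    IntegrableOn.continuousOn_mul (contE μ).continuousOn hi2 isCompact_Icc
  have heq : (fun s : ℝ => Complex.exp (2 * Complex.I * μ * ((s:ℂ) - (t:ℂ))) * σ₂ s)
      = fun s : ℝ => Complex.exp (2 * Complex.I * μ * (-(t:ℂ)))
          * (Complex.exp (2 * Complex.I * μ * (s:ℂ)) * σ₂ s) := by
    funext s; rw [expSplit0]; ring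
  rw [heq]
  exact h1.const_mul _

/-- The kernel-swap identity for `K1 (K1 z)`. -/
lemma IN_eq1 (hi1 : IntegrableOn σ₁ (Icc (0:ℝ) 1) volume)
    (hi2 : IntegrableOn σ₂ (Icc (0:ℝ) 1) volume)
    (hz : ContinuousOn z (Icc (0:ℝ) 1)) {t : ℝ} (ht : t ∈ Icc (0:ℝ) 1) :
    (∫ s in t..(1:ℝ), Complex.exp (2 * Complex.I * μ * ((s:ℂ) - (t:ℂ))) * σ₂ s
        * (K1 σ₁ σ₂ μ z s))
      = ∫ u in (0:ℝ)..1,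
          (σ₁ u * ∫ v in u..(1:ℝ), Complex.exp (2 * Complex.I * μ * ((v:ℂ) - (u:ℂ))) * σ₂ v * z v)
            * ∫ s in (max t u)..(1:ℝ), Complex.exp (2 * Complex.I * μ * ((s:ℂ) - (t:ℂ))) * σ₂ s := by
  have h := swap_tri (t := t)
    (F := fun s : ℝ => Complex.exp (2 * Complex.I * μ * ((s:ℂ) - (t:ℂ))) * σ₂ s)
    (G := fun u : ℝ => σ₁ u * ∫ v in u..(1:ℝ),
      Complex.exp (2 * Complex.I * μ * ((v:ℂ) - (u:ℂ))) * σ₂ v * z v)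
    ht.1 ht.2 (Fint1 hi2 t) (outerInt1 hi1 hi2 hz)
  calc (∫ s in t..(1:ℝ), Complex.exp (2 * Complex.I * μ * ((s:ℂ) - (t:ℂ))) * σ₂ s
        * (K1 σ₁ σ₂ μ z s))
      = ∫ s in t..(1:ℝ),
          (Complex.exp (2 * Complex.I * μ * ((s:ℂ) - (t:ℂ))) * σ₂ s)
            * ∫ u in (0:ℝ)..s, (σ₁ u * ∫ v in u..(1:ℝ),
              Complex.exp (2 * Complex.I * μ * ((v:ℂ) - (u:ℂ))) * σ₂ v * z v) := by
        apply intervalIntegral.integral_congr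
        intro s _
        simp only [K1]
    _ = _ := h

lemma tailCont1 (hi2 : IntegrableOn σ₂ (Icc (0:ℝ) 1) volume) {t : ℝ} (ht : t ∈ Icc (0:ℝ) 1) :
    ContinuousOn (fun u : ℝ => ∫ s in (max t u)..(1:ℝ),
      Complex.exp (2 * Complex.I * μ * ((s:ℂ) - (t:ℂ))) * σ₂ s) (Icc (0:ℝ) 1) := by
  have hFi := Fint1 (μ := μ) hi2 t
  have hprim : ContinuousOn (fun y : ℝ => ∫ s in (0:ℝ)..y,
      Complex.exp (2 * Complex.I * μ * ((s:ℂ) - (t:ℂ))) * σ₂ s) (Icc (0:ℝ) 1) := by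
    have h := intervalIntegral.continuousOn_primitive_interval
      (a := (0:ℝ)) (b := (1:ℝ)) (μ := volume)
      (f := fun s : ℝ => Complex.exp (2 * Complex.I * μ * ((s:ℂ) - (t:ℂ))) * σ₂ s) ?_
    · rwa [uIcc_of_le zero_le_one] at h
    · rw [uIcc_of_le zero_le_one]; exact hFi
  have hmax : ContinuousOn (fun u : ℝ => max t u) (Icc (0:ℝ) 1) :=
    (continuous_const.max continuous_id).continuousOn
  have hmaps : MapsTo (fun u : ℝ => max t u) (Icc (0:ℝ) 1) (Icc (0:ℝ) 1) := by
    intro u hu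
    exact ⟨le_trans ht.1 (le_max_left _ _), max_le ht.2 hu.2⟩
  have hc : ContinuousOn (fun u : ℝ =>
      (∫ s in (0:ℝ)..1, Complex.exp (2 * Complex.I * μ * ((s:ℂ) - (t:ℂ))) * σ₂ s)
        - ∫ s in (0:ℝ)..(max t u), Complex.exp (2 * Complex.I * μ * ((s:ℂ) - (t:ℂ))) * σ₂ s)
      (Icc (0:ℝ) 1) :=
    continuousOn_const.sub (hprim.comp hmax hmaps)
  apply hc.congr
  intro u hu
  rw [eq_comm, sub_eq_iff_eq_add', ← intervalIntegral.integral_add_adjacent_intervals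
    (b := max t u) (II hFi le_rfl (le_trans ht.1 (le_max_left _ _)) (max_le ht.2 hu.2))
    (II hFi (le_trans ht.1 (le_max_left _ _)) (max_le ht.2 hu.2) le_rfl)]

lemma tailBound1 (hr : 0 ≤ r) (hμ : -r < μ.im)
    {t u : ℝ} (ht : t ∈ Icc (0:ℝ) 1) (hu : u ∈ Icc (0:ℝ) 1) :
    ‖∫ s in (max t u)..(1:ℝ), Complex.exp (2 * Complex.I * μ * ((s:ℂ) - (t:ℂ))) * σ₂ s‖
      ≤ Real.exp (2*r) * gamma02 σ₂ μ (max t u) := by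
  have hm1 : max t u ≤ 1 := max_le ht.2 hu.2
  have hsplit : (fun s : ℝ => Complex.exp (2 * Complex.I * μ * ((s:ℂ) - (t:ℂ))) * σ₂ s)
      = fun s : ℝ => Complex.exp (2 * Complex.I * μ * (((max t u : ℝ):ℂ) - (t:ℂ)))
          * (Complex.exp (2 * Complex.I * μ * ((s:ℂ) - ((max t u : ℝ):ℂ))) * σ₂ s) := by
    funext s
    rw [expSplit μ s t (max t u)]
    ring
  rw [hsplit, intervalIntegral.integral_const_mul, norm_mul]
  have h1 : ‖Complex.exp (2 * Complex.I * μ * (((max t u : ℝ):ℂ) - (t:ℂ)))‖ ≤ Real.exp (2*r) :=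
    expNormBound hr hμ (le_max_left _ _) (by linarith [ht.1])
  have h2 : ‖∫ s in (max t u)..(1:ℝ),
      Complex.exp (2 * Complex.I * μ * ((s:ℂ) - ((max t u : ℝ):ℂ))) * σ₂ s‖
        = gamma02 σ₂ μ (max t u) := by
    simp only [gamma02]
  rw [h2]
  exact mul_le_mul_of_nonneg_right h1 (g02_nn σ₂ μ _)

end K1sq
section K1sqBounds

variable {σ₁ σ₂ : ℝ → ℂ} {μ : ℂ} {r : ℝ} {z : ℝ → ℂ}

lemma sig1g02Int (hi1 : IntegrableOn σ₁ (Icc (0:ℝ) 1) volume)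
    (hi2 : IntegrableOn σ₂ (Icc (0:ℝ) 1) volume) :
    IntegrableOn (fun u : ℝ => ‖σ₁ u‖ * gamma02 σ₂ μ u) (Icc (0:ℝ) 1) volume :=
  IntegrableOn.mul_continuousOn hi1.norm (g02_cont hi2) isCompact_Icc

lemma sig1g02sqInt (hi1 : IntegrableOn σ₁ (Icc (0:ℝ) 1) volume)
    (hi2 : IntegrableOn σ₂ (Icc (0:ℝ) 1) volume) :
    IntegrableOn (fun u : ℝ => ‖σ₁ u‖ * (gamma02 σ₂ μ u)^2) (Icc (0:ℝ) 1) volume :=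
  IntegrableOn.mul_continuousOn hi1.norm ((g02_cont hi2).pow 2) isCompact_Icc

/-- Main bound for the iterated operator on a general continuous function. -/
lemma K1sqBound (hr : 0 ≤ r) (hμ : -r < μ.im)
    (hi1 : IntegrableOn σ₁ (Icc (0:ℝ) 1) volume)
    (hi2 : IntegrableOn σ₂ (Icc (0:ℝ) 1) volume)
    (hz : ContinuousOn z (Icc (0:ℝ) 1)) {C : ℝ}
    (hC : ∀ s ∈ Icc (0:ℝ) 1, ‖z s‖ ≤ C) {x : ℝ} (hx : x ∈ Icc (0:ℝ) 1) :
    ‖K1 σ₁ σ₂ μ (K1 σ₁ σ₂ μ z) x‖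
      ≤ 2 * Real.exp (2*r) * Real.exp (2*r) * C * (∫ s in (0:ℝ)..1, ‖σ₂ s‖)
          * (∫ s in (0:ℝ)..1, ‖σ₁ s‖) * (∫ u in (0:ℝ)..1, ‖σ₁ u‖ * gamma02 σ₂ μ u) := by
  have hC0 : 0 ≤ C := le_trans (norm_nonneg _) (hC 0 ⟨le_rfl, zero_le_one⟩)
  set SS1 : ℝ := ∫ s in (0:ℝ)..1, ‖σ₁ s‖ with hSS1def
  set SS2 : ℝ := ∫ s in (0:ℝ)..1, ‖σ₂ s‖ with hSS2def
  set Hol : ℝ := ∫ u in (0:ℝ)..1, ‖σ₁ u‖ * gamma02 σ₂ μ u with hHoldef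
  have hSS1 : 0 ≤ SS1 := intervalIntegral.integral_nonneg zero_le_one (fun s _ => norm_nonneg _)
  have hSS2 : 0 ≤ SS2 := intervalIntegral.integral_nonneg zero_le_one (fun s _ => norm_nonneg _)
  have hHol : 0 ≤ Hol := intervalIntegral.integral_nonneg zero_le_one
    (fun s _ => mul_nonneg (norm_nonneg _) (g02_nn σ₂ μ s))
  set B : ℝ := Real.exp (2*r) * C * SS2 with hBdef
  have hB : 0 ≤ B := by positivity
  have hKz := K1cont (μ := μ) hi1 hi2 hz
  -- inner estimate
  have hIN : ∀ t ∈ Icc (0:ℝ) 1,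
      ‖∫ s in t..(1:ℝ), Complex.exp (2 * Complex.I * μ * ((s:ℂ) - (t:ℂ))) * σ₂ s
          * (K1 σ₁ σ₂ μ z s)‖
        ≤ Real.exp (2*r) * B * (gamma02 σ₂ μ t * SS1 + Hol) := by
    intro t ht
    rw [IN_eq1 hi1 hi2 hz ht]
    have hfTL : IntervalIntegrable (fun u : ℝ =>
        (σ₁ u * ∫ v in u..(1:ℝ), Complex.exp (2 * Complex.I * μ * ((v:ℂ) - (u:ℂ))) * σ₂ v * z v)
          * ∫ s in (max t u)..(1:ℝ), Complex.exp (2 * Complex.I * μ * ((s:ℂ) - (t:ℂ))) * σ₂ s)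
        volume 0 1 :=
      II ((outerInt1 hi1 hi2 hz).mul_continuousOn (tailCont1 hi2 ht) isCompact_Icc)
        le_rfl zero_le_one le_rfl
    calc ‖∫ u in (0:ℝ)..1,
        (σ₁ u * ∫ v in u..(1:ℝ), Complex.exp (2 * Complex.I * μ * ((v:ℂ) - (u:ℂ))) * σ₂ v * z v)
          * ∫ s in (max t u)..(1:ℝ), Complex.exp (2 * Complex.I * μ * ((s:ℂ) - (t:ℂ))) * σ₂ s‖
        ≤ ∫ u in (0:ℝ)..1, ‖(σ₁ u * ∫ v in u..(1:ℝ),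
            Complex.exp (2 * Complex.I * μ * ((v:ℂ) - (u:ℂ))) * σ₂ v * z v)
          * ∫ s in (max t u)..(1:ℝ), Complex.exp (2 * Complex.I * μ * ((s:ℂ) - (t:ℂ))) * σ₂ s‖ :=
          intervalIntegral.norm_integral_le_integral_norm zero_le_one
      _ ≤ ∫ u in (0:ℝ)..1, ‖σ₁ u‖ * (B * (Real.exp (2*r)
            * (gamma02 σ₂ μ t + gamma02 σ₂ μ u))) := by
          apply intervalIntegral.integral_mono_on zero_le_one hfTL.norm
          · exact II (IntegrableOn.mul_continuousOn hi1.norm (continuousOn_const.mul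
              (continuousOn_const.mul (continuousOn_const.add (g02_cont hi2))))
              isCompact_Icc) le_rfl zero_le_one le_rfl
          intro u hu
          rw [norm_mul, norm_mul]
          have h1 : ‖∫ v in u..(1:ℝ),
              Complex.exp (2 * Complex.I * μ * ((v:ℂ) - (u:ℂ))) * σ₂ v * z v‖ ≤ B :=
            innerBound1 hr hμ hi2 hz hC hu
          have h2 : ‖∫ s in (max t u)..(1:ℝ),
              Complex.exp (2 * Complex.I * μ * ((s:ℂ) - (t:ℂ))) * σ₂ s‖
                ≤ Real.exp (2*r) * (gamma02 σ₂ μ t + gamma02 σ₂ μ u) := by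
            calc ‖∫ s in (max t u)..(1:ℝ),
                Complex.exp (2 * Complex.I * μ * ((s:ℂ) - (t:ℂ))) * σ₂ s‖
                ≤ Real.exp (2*r) * gamma02 σ₂ μ (max t u) := tailBound1 hr hμ ht hu
              _ ≤ Real.exp (2*r) * (gamma02 σ₂ μ t + gamma02 σ₂ μ u) :=
                  mul_le_mul_of_nonneg_left (g02_max σ₂ μ t u) (Real.exp_nonneg _)
          calc ‖σ₁ u‖ * ‖∫ v in u..(1:ℝ),
              Complex.exp (2 * Complex.I * μ * ((v:ℂ) - (u:ℂ))) * σ₂ v * z v‖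
              * ‖∫ s in (max t u)..(1:ℝ),
                  Complex.exp (2 * Complex.I * μ * ((s:ℂ) - (t:ℂ))) * σ₂ s‖
              ≤ ‖σ₁ u‖ * B * (Real.exp (2*r) * (gamma02 σ₂ μ t + gamma02 σ₂ μ u)) := by
                apply mul_le_mul (mul_le_mul_of_nonneg_left h1 (norm_nonneg _)) h2
                  (norm_nonneg _)
                positivity
            _ = ‖σ₁ u‖ * (B * (Real.exp (2*r) * (gamma02 σ₂ μ t + gamma02 σ₂ μ u))) := by
                ring
      _ = Real.exp (2*r) * B * (gamma02 σ₂ μ t * SS1 + Hol) := by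
          rw [show (fun u : ℝ => ‖σ₁ u‖ * (B * (Real.exp (2*r)
              * (gamma02 σ₂ μ t + gamma02 σ₂ μ u))))
            = fun u : ℝ => (B * Real.exp (2*r) * gamma02 σ₂ μ t) * ‖σ₁ u‖
                + (B * Real.exp (2*r)) * (‖σ₁ u‖ * gamma02 σ₂ μ u) from
            funext fun u => by ring]
          rw [intervalIntegral.integral_add
            ((II hi1.norm le_rfl zero_le_one le_rfl).const_mul _)
            ((II (sig1g02Int hi1 hi2) le_rfl zero_le_one le_rfl).const_mul _),
            intervalIntegral.integral_const_mul, intervalIntegral.integral_const_mul]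
          rw [← hSS1def, ← hHoldef]
          ring
  -- outer estimate
  calc ‖K1 σ₁ σ₂ μ (K1 σ₁ σ₂ μ z) x‖
      ≤ ∫ t in (0:ℝ)..x, ‖σ₁ t * ∫ s in t..(1:ℝ),
          Complex.exp (2 * Complex.I * μ * ((s:ℂ) - (t:ℂ))) * σ₂ s * (K1 σ₁ σ₂ μ z s)‖ :=
        intervalIntegral.norm_integral_le_integral_norm hx.1
    _ ≤ ∫ t in (0:ℝ)..x, ‖σ₁ t‖ * (Real.exp (2*r) * B * (gamma02 σ₂ μ t * SS1 + Hol)) := by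
        apply intervalIntegral.integral_mono_on hx.1
          ((II (outerInt1 hi1 hi2 hKz) le_rfl hx.1 hx.2).norm)
          (II (IntegrableOn.mul_continuousOn hi1.norm (continuousOn_const.mul
            ((g02_cont hi2).mul continuousOn_const |>.add continuousOn_const))
            isCompact_Icc) le_rfl hx.1 hx.2)
        intro t ht
        rw [norm_mul]
        exact mul_le_mul_of_nonneg_left (hIN t ⟨ht.1, ht.2.trans hx.2⟩) (norm_nonneg _)
    _ ≤ ∫ t in (0:ℝ)..1, ‖σ₁ t‖ * (Real.exp (2*r) * B * (gamma02 σ₂ μ t * SS1 + Hol)) := by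
        apply intervalIntegral.integral_mono_interval le_rfl hx.1 hx.2
        · filter_upwards [MeasureTheory.ae_restrict_mem measurableSet_Ioc] with t ht
          have := g02_nn σ₂ μ t
          positivity
        · exact II (IntegrableOn.mul_continuousOn hi1.norm (continuousOn_const.mul
            ((g02_cont hi2).mul continuousOn_const |>.add continuousOn_const))
            isCompact_Icc) le_rfl zero_le_one le_rfl
    _ = 2 * Real.exp (2*r) * Real.exp (2*r) * C * SS2 * SS1 * Hol := by
        rw [show (fun t : ℝ => ‖σ₁ t‖ * (Real.exp (2*r) * B * (gamma02 σ₂ μ t * SS1 + Hol)))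
            = fun t : ℝ => (Real.exp (2*r) * B * SS1) * (‖σ₁ t‖ * gamma02 σ₂ μ t)
                + (Real.exp (2*r) * B * Hol) * ‖σ₁ t‖ from
          funext fun t => by ring]
        rw [intervalIntegral.integral_add
          ((II (sig1g02Int hi1 hi2) le_rfl zero_le_one le_rfl).const_mul _)
          ((II hi1.norm le_rfl zero_le_one le_rfl).const_mul _),
          intervalIntegral.integral_const_mul, intervalIntegral.integral_const_mul]
        rw [← hSS1def, ← hHoldef, hBdef]
        ring

/-- Sharper bound for the iterated operator applied to the constant function. -/
lemma K1sqE (hr : 0 ≤ r) (hμ : -r < μ.im)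
    (hi1 : IntegrableOn σ₁ (Icc (0:ℝ) 1) volume)
    (hi2 : IntegrableOn σ₂ (Icc (0:ℝ) 1) volume) {x : ℝ} (hx : x ∈ Icc (0:ℝ) 1) :
    ‖K1 σ₁ σ₂ μ (K1 σ₁ σ₂ μ eFun) x‖
      ≤ 2 * Real.exp (2*r) * (∫ s in (0:ℝ)..1, ‖σ₁ s‖)
          * (∫ u in (0:ℝ)..1, ‖σ₁ u‖ * (gamma02 σ₂ μ u)^2) := by
  have hze : ContinuousOn eFun (Icc (0:ℝ) 1) := continuous_const.continuousOn
  set SS1 : ℝ := ∫ s in (0:ℝ)..1, ‖σ₁ s‖ with hSS1def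
  set G2 : ℝ := ∫ u in (0:ℝ)..1, ‖σ₁ u‖ * (gamma02 σ₂ μ u)^2 with hG2def
  have hSS1 : 0 ≤ SS1 := intervalIntegral.integral_nonneg zero_le_one (fun s _ => norm_nonneg _)
  have hG2 : 0 ≤ G2 := intervalIntegral.integral_nonneg zero_le_one
    (fun s _ => mul_nonneg (norm_nonneg _) (sq_nonneg _))
  have hKz := K1cont (μ := μ) hi1 hi2 hze
  have hIN : ∀ t ∈ Icc (0:ℝ) 1,
      ‖∫ s in t..(1:ℝ), Complex.exp (2 * Complex.I * μ * ((s:ℂ) - (t:ℂ))) * σ₂ s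
          * (K1 σ₁ σ₂ μ eFun s)‖
        ≤ Real.exp (2*r) * ((1/2) * (gamma02 σ₂ μ t)^2 * SS1 + (3/2) * G2) := by
    intro t ht
    rw [IN_eq1 hi1 hi2 hze ht]
    have hfTL : IntervalIntegrable (fun u : ℝ =>
        (σ₁ u * ∫ v in u..(1:ℝ), Complex.exp (2 * Complex.I * μ * ((v:ℂ) - (u:ℂ))) * σ₂ v * eFun v)
          * ∫ s in (max t u)..(1:ℝ), Complex.exp (2 * Complex.I * μ * ((s:ℂ) - (t:ℂ))) * σ₂ s)
        volume 0 1 :=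
      II ((outerInt1 hi1 hi2 hze).mul_continuousOn (tailCont1 hi2 ht) isCompact_Icc)
        le_rfl zero_le_one le_rfl
    calc ‖∫ u in (0:ℝ)..1,
        (σ₁ u * ∫ v in u..(1:ℝ), Complex.exp (2 * Complex.I * μ * ((v:ℂ) - (u:ℂ))) * σ₂ v * eFun v)
          * ∫ s in (max t u)..(1:ℝ), Complex.exp (2 * Complex.I * μ * ((s:ℂ) - (t:ℂ))) * σ₂ s‖
        ≤ ∫ u in (0:ℝ)..1, ‖(σ₁ u * ∫ v in u..(1:ℝ),
            Complex.exp (2 * Complex.I * μ * ((v:ℂ) - (u:ℂ))) * σ₂ v * eFun v)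
          * ∫ s in (max t u)..(1:ℝ), Complex.exp (2 * Complex.I * μ * ((s:ℂ) - (t:ℂ))) * σ₂ s‖ :=
          intervalIntegral.norm_integral_le_integral_norm zero_le_one
      _ ≤ ∫ u in (0:ℝ)..1, ‖σ₁ u‖ * (Real.exp (2*r)
            * ((1/2) * (gamma02 σ₂ μ t)^2 + (3/2) * (gamma02 σ₂ μ u)^2)) := by
          apply intervalIntegral.integral_mono_on zero_le_one hfTL.norm
          · exact II (IntegrableOn.mul_continuousOn hi1.norm (continuousOn_const.mul
              ((continuousOn_const.mul continuousOn_const).add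
                (continuousOn_const.mul ((g02_cont hi2).pow 2))))
              isCompact_Icc) le_rfl zero_le_one le_rfl
          intro u hu
          rw [norm_mul, norm_mul]
          have h1 : ‖∫ v in u..(1:ℝ),
              Complex.exp (2 * Complex.I * μ * ((v:ℂ) - (u:ℂ))) * σ₂ v * eFun v‖
                = gamma02 σ₂ μ u := (g02_eq σ₂ μ u).symm
          have h2 : ‖∫ s in (max t u)..(1:ℝ),
              Complex.exp (2 * Complex.I * μ * ((s:ℂ) - (t:ℂ))) * σ₂ s‖
                ≤ Real.exp (2*r) * (gamma02 σ₂ μ t + gamma02 σ₂ μ u) := by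
            calc ‖∫ s in (max t u)..(1:ℝ),
                Complex.exp (2 * Complex.I * μ * ((s:ℂ) - (t:ℂ))) * σ₂ s‖
                ≤ Real.exp (2*r) * gamma02 σ₂ μ (max t u) := tailBound1 hr hμ ht hu
              _ ≤ Real.exp (2*r) * (gamma02 σ₂ μ t + gamma02 σ₂ μ u) :=
                  mul_le_mul_of_nonneg_left (g02_max σ₂ μ t u) (Real.exp_nonneg _)
          rw [h1]
          have hkey : gamma02 σ₂ μ u * (gamma02 σ₂ μ t + gamma02 σ₂ μ u)
              ≤ (1/2) * (gamma02 σ₂ μ t)^2 + (3/2) * (gamma02 σ₂ μ u)^2 := by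
            nlinarith [sq_nonneg (gamma02 σ₂ μ t - gamma02 σ₂ μ u)]
          calc ‖σ₁ u‖ * gamma02 σ₂ μ u
              * ‖∫ s in (max t u)..(1:ℝ),
                  Complex.exp (2 * Complex.I * μ * ((s:ℂ) - (t:ℂ))) * σ₂ s‖
              ≤ ‖σ₁ u‖ * gamma02 σ₂ μ u * (Real.exp (2*r)
                  * (gamma02 σ₂ μ t + gamma02 σ₂ μ u)) := by
                apply mul_le_mul_of_nonneg_left h2
                exact mul_nonneg (norm_nonneg _) (g02_nn σ₂ μ u)
            _ = Real.exp (2*r) * (‖σ₁ u‖ * (gamma02 σ₂ μ u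
                  * (gamma02 σ₂ μ t + gamma02 σ₂ μ u))) := by ring
            _ ≤ Real.exp (2*r) * (‖σ₁ u‖ * ((1/2) * (gamma02 σ₂ μ t)^2
                  + (3/2) * (gamma02 σ₂ μ u)^2)) := by
                apply mul_le_mul_of_nonneg_left _ (Real.exp_nonneg _)
                exact mul_le_mul_of_nonneg_left hkey (norm_nonneg _)
            _ = ‖σ₁ u‖ * (Real.exp (2*r)
                  * ((1/2) * (gamma02 σ₂ μ t)^2 + (3/2) * (gamma02 σ₂ μ u)^2)) := by ring
      _ = Real.exp (2*r) * ((1/2) * (gamma02 σ₂ μ t)^2 * SS1 + (3/2) * G2) := by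
          rw [show (fun u : ℝ => ‖σ₁ u‖ * (Real.exp (2*r)
              * ((1/2) * (gamma02 σ₂ μ t)^2 + (3/2) * (gamma02 σ₂ μ u)^2)))
            = fun u : ℝ => (Real.exp (2*r) * ((1/2) * (gamma02 σ₂ μ t)^2)) * ‖σ₁ u‖
                + (Real.exp (2*r) * (3/2)) * (‖σ₁ u‖ * (gamma02 σ₂ μ u)^2) from
            funext fun u => by ring]
          rw [intervalIntegral.integral_add
            ((II hi1.norm le_rfl zero_le_one le_rfl).const_mul _)
            ((II (sig1g02sqInt hi1 hi2) le_rfl zero_le_one le_rfl).const_mul _),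
            intervalIntegral.integral_const_mul, intervalIntegral.integral_const_mul]
          rw [← hSS1def, ← hG2def]
          ring
  calc ‖K1 σ₁ σ₂ μ (K1 σ₁ σ₂ μ eFun) x‖
      ≤ ∫ t in (0:ℝ)..x, ‖σ₁ t * ∫ s in t..(1:ℝ),
          Complex.exp (2 * Complex.I * μ * ((s:ℂ) - (t:ℂ))) * σ₂ s * (K1 σ₁ σ₂ μ eFun s)‖ :=
        intervalIntegral.norm_integral_le_integral_norm hx.1
    _ ≤ ∫ t in (0:ℝ)..x, ‖σ₁ t‖ * (Real.exp (2*r)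
          * ((1/2) * (gamma02 σ₂ μ t)^2 * SS1 + (3/2) * G2)) := by
        apply intervalIntegral.integral_mono_on hx.1
          ((II (outerInt1 hi1 hi2 hKz) le_rfl hx.1 hx.2).norm)
          (II (IntegrableOn.mul_continuousOn hi1.norm (continuousOn_const.mul
            (((continuousOn_const.mul ((g02_cont hi2).pow 2)).mul continuousOn_const).add
              continuousOn_const)) isCompact_Icc) le_rfl hx.1 hx.2)
        intro t ht
        rw [norm_mul]
        exact mul_le_mul_of_nonneg_left (hIN t ⟨ht.1, ht.2.trans hx.2⟩) (norm_nonneg _)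
    _ ≤ ∫ t in (0:ℝ)..1, ‖σ₁ t‖ * (Real.exp (2*r)
          * ((1/2) * (gamma02 σ₂ μ t)^2 * SS1 + (3/2) * G2)) := by
        apply intervalIntegral.integral_mono_interval le_rfl hx.1 hx.2
        · filter_upwards [MeasureTheory.ae_restrict_mem measurableSet_Ioc] with t ht
          have := g02_nn σ₂ μ t
          positivity
        · exact II (IntegrableOn.mul_continuousOn hi1.norm (continuousOn_const.mul
            (((continuousOn_const.mul ((g02_cont hi2).pow 2)).mul continuousOn_const).add
              continuousOn_const)) isCompact_Icc) le_rfl zero_le_one le_rfl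
    _ = 2 * Real.exp (2*r) * SS1 * G2 := by
        rw [show (fun t : ℝ => ‖σ₁ t‖ * (Real.exp (2*r)
            * ((1/2) * (gamma02 σ₂ μ t)^2 * SS1 + (3/2) * G2)))
          = fun t : ℝ => (Real.exp (2*r) * (1/2) * SS1) * (‖σ₁ t‖ * (gamma02 σ₂ μ t)^2)
              + (Real.exp (2*r) * (3/2) * G2) * ‖σ₁ t‖ from
          funext fun t => by ring]
        rw [intervalIntegral.integral_add
          ((II (sig1g02sqInt hi1 hi2) le_rfl zero_le_one le_rfl).const_mul _)
          ((II hi1.norm le_rfl zero_le_one le_rfl).const_mul _),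
          intervalIntegral.integral_const_mul, intervalIntegral.integral_const_mul]
        rw [← hSS1def, ← hG2def]
        ring

end K1sqBounds
/-! ### K2 side -/

lemma expSplit0' (μ : ℂ) (t s : ℝ) :
    Complex.exp (2 * Complex.I * μ * ((t:ℂ) - (s:ℂ)))
      = Complex.exp (2 * Complex.I * μ * (t:ℂ))
        * Complex.exp (2 * Complex.I * μ * (-(s:ℂ))) := by
  rw [← Complex.exp_add]; congr 1; ring

section K2side

variable {σ₁ σ₂ : ℝ → ℂ} {μ : ℂ} {r : ℝ} {z : ℝ → ℂ}

lemma gInt2 (hi1 : IntegrableOn σ₁ (Icc (0:ℝ) 1) volume)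
    (hz : ContinuousOn z (Icc (0:ℝ) 1)) :
    IntegrableOn (fun s : ℝ => Complex.exp (2 * Complex.I * μ * (-(s:ℂ))) * σ₁ s * z s)
      (Icc (0:ℝ) 1) volume := by
  have h1 : IntegrableOn (fun s : ℝ => Complex.exp (2 * Complex.I * μ * (-(s:ℂ))) * σ₁ s)
      (Icc (0:ℝ) 1) volume :=
    IntegrableOn.continuousOn_mul
      ((continuous_const.mul Complex.continuous_ofReal.neg).cexp).continuousOn hi1 isCompact_Icc
  exact h1.mul_continuousOn hz isCompact_Icc

lemma innerEq2 (σ₁ : ℝ → ℂ) (μ : ℂ) (z : ℝ → ℂ) (t : ℝ) :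
    (fun s : ℝ => Complex.exp (2 * Complex.I * μ * ((t:ℂ) - (s:ℂ))) * σ₁ s * z s)
      = fun s : ℝ => Complex.exp (2 * Complex.I * μ * (t:ℂ))
          * (Complex.exp (2 * Complex.I * μ * (-(s:ℂ))) * σ₁ s * z s) := by
  funext s; rw [expSplit0']; ring

lemma innerII2 (hi1 : IntegrableOn σ₁ (Icc (0:ℝ) 1) volume)
    (hz : ContinuousOn z (Icc (0:ℝ) 1)) {t a b : ℝ}
    (ha : 0 ≤ a) (hab : a ≤ b) (hb : b ≤ 1) :
    IntervalIntegrable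
      (fun s : ℝ => Complex.exp (2 * Complex.I * μ * ((t:ℂ) - (s:ℂ))) * σ₁ s * z s) volume a b := by
  rw [innerEq2]
  exact (II (gInt2 hi1 hz) ha hab hb).const_mul _

lemma innerRep2 (hi1 : IntegrableOn σ₁ (Icc (0:ℝ) 1) volume)
    (hz : ContinuousOn z (Icc (0:ℝ) 1)) (t : ℝ) :
    (∫ s in (0:ℝ)..t, Complex.exp (2 * Complex.I * μ * ((t:ℂ) - (s:ℂ))) * σ₁ s * z s)
      = Complex.exp (2 * Complex.I * μ * (t:ℂ))
        * ∫ s in (0:ℝ)..t, Complex.exp (2 * Complex.I * μ * (-(s:ℂ))) * σ₁ s * z s := by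
  rw [innerEq2, intervalIntegral.integral_const_mul]

lemma primCont2 (hi1 : IntegrableOn σ₁ (Icc (0:ℝ) 1) volume)
    (hz : ContinuousOn z (Icc (0:ℝ) 1)) :
    ContinuousOn (fun y : ℝ => ∫ s in (0:ℝ)..y,
      Complex.exp (2 * Complex.I * μ * (-(s:ℂ))) * σ₁ s * z s) (Icc (0:ℝ) 1) := by
  have h := intervalIntegral.continuousOn_primitive_interval
    (a := (0:ℝ)) (b := (1:ℝ)) (μ := volume)
    (f := fun s : ℝ => Complex.exp (2 * Complex.I * μ * (-(s:ℂ))) * σ₁ s * z s) ?_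
  · rwa [uIcc_of_le zero_le_one] at h
  · rw [uIcc_of_le zero_le_one]; exact gInt2 hi1 hz

lemma innerCont2 (hi1 : IntegrableOn σ₁ (Icc (0:ℝ) 1) volume)
    (hz : ContinuousOn z (Icc (0:ℝ) 1)) :
    ContinuousOn (fun t : ℝ => ∫ s in (0:ℝ)..t,
      Complex.exp (2 * Complex.I * μ * ((t:ℂ) - (s:ℂ))) * σ₁ s * z s) (Icc (0:ℝ) 1) := by
  have hc : ContinuousOn (fun t : ℝ => Complex.exp (2 * Complex.I * μ * (t:ℂ))
      * ∫ s in (0:ℝ)..t, Complex.exp (2 * Complex.I * μ * (-(s:ℂ))) * σ₁ s * z s)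
      (Icc (0:ℝ) 1) :=
    (contE μ).continuousOn.mul (primCont2 hi1 hz)
  exact hc.congr (fun t _ => innerRep2 hi1 hz t)

lemma outerInt2 (hi1 : IntegrableOn σ₁ (Icc (0:ℝ) 1) volume)
    (hi2 : IntegrableOn σ₂ (Icc (0:ℝ) 1) volume)
    (hz : ContinuousOn z (Icc (0:ℝ) 1)) :
    IntegrableOn (fun t : ℝ => σ₂ t * ∫ s in (0:ℝ)..t,
      Complex.exp (2 * Complex.I * μ * ((t:ℂ) - (s:ℂ))) * σ₁ s * z s) (Icc (0:ℝ) 1) volume :=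
  hi2.mul_continuousOn (innerCont2 hi1 hz) isCompact_Icc

lemma K2cont (hi1 : IntegrableOn σ₁ (Icc (0:ℝ) 1) volume)
    (hi2 : IntegrableOn σ₂ (Icc (0:ℝ) 1) volume)
    (hz : ContinuousOn z (Icc (0:ℝ) 1)) :
    ContinuousOn (K2 σ₁ σ₂ μ z) (Icc (0:ℝ) 1) := by
  have hout := outerInt2 (μ := μ) hi1 hi2 hz
  have hprim : ContinuousOn (fun x : ℝ => ∫ t in (0:ℝ)..x, (fun t : ℝ => σ₂ t *
      ∫ s in (0:ℝ)..t, Complex.exp (2 * Complex.I * μ * ((t:ℂ) - (s:ℂ))) * σ₁ s * z s) t)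
      (Icc (0:ℝ) 1) := by
    have h := intervalIntegral.continuousOn_primitive_interval
      (a := (0:ℝ)) (b := (1:ℝ)) (μ := volume)
      (f := fun t : ℝ => σ₂ t * ∫ s in (0:ℝ)..t,
        Complex.exp (2 * Complex.I * μ * ((t:ℂ) - (s:ℂ))) * σ₁ s * z s) ?_
    · rwa [uIcc_of_le zero_le_one] at h
    · rw [uIcc_of_le zero_le_one]; exact hout
  have hc : ContinuousOn (fun x : ℝ =>
      (∫ t in (0:ℝ)..1, σ₂ t * ∫ s in (0:ℝ)..t,
        Complex.exp (2 * Complex.I * μ * ((t:ℂ) - (s:ℂ))) * σ₁ s * z s)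
      - ∫ t in (0:ℝ)..x, σ₂ t * ∫ s in (0:ℝ)..t,
        Complex.exp (2 * Complex.I * μ * ((t:ℂ) - (s:ℂ))) * σ₁ s * z s) (Icc (0:ℝ) 1) :=
    continuousOn_const.sub hprim
  apply hc.congr
  intro x hx
  rw [eq_comm]
  simp only [K2]
  rw [intervalIntegral.integral_interval_sub_left
    (II hout le_rfl zero_le_one le_rfl) (II hout le_rfl hx.1 hx.2)]

lemma g01_eq (σ₁ : ℝ → ℂ) (μ : ℂ) (t : ℝ) :
    gamma01 σ₁ μ t = ‖∫ s in (0:ℝ)..t,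
      Complex.exp (2 * Complex.I * μ * ((t:ℂ) - (s:ℂ))) * σ₁ s * eFun s‖ := by
  simp only [gamma01, eFun, mul_one]

lemma g01_nn (σ₁ : ℝ → ℂ) (μ : ℂ) (t : ℝ) : 0 ≤ gamma01 σ₁ μ t := by
  simp only [gamma01]; exact norm_nonneg _

lemma g01_cont (hi1 : IntegrableOn σ₁ (Icc (0:ℝ) 1) volume) :
    ContinuousOn (gamma01 σ₁ μ) (Icc (0:ℝ) 1) := by
  have h := (innerCont2 (μ := μ) (z := eFun) hi1 continuous_const.continuousOn).norm
  exact h.congr (fun t _ => g01_eq σ₁ μ t)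

lemma g01_min (σ₁ : ℝ → ℂ) (μ : ℂ) (t u : ℝ) :
    gamma01 σ₁ μ (min t u) ≤ gamma01 σ₁ μ t + gamma01 σ₁ μ u := by
  rcases le_total t u with h | h
  · rw [min_eq_left h]; linarith [g01_nn σ₁ μ u]
  · rw [min_eq_right h]; linarith [g01_nn σ₁ μ t]

lemma innerBound2 (hr : 0 ≤ r) (hμ : -r < μ.im)
    (hi1 : IntegrableOn σ₁ (Icc (0:ℝ) 1) volume)
    (hz : ContinuousOn z (Icc (0:ℝ) 1)) {C : ℝ}
    (hC : ∀ s ∈ Icc (0:ℝ) 1, ‖z s‖ ≤ C) {t : ℝ} (ht : t ∈ Icc (0:ℝ) 1) :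
    ‖∫ s in (0:ℝ)..t, Complex.exp (2 * Complex.I * μ * ((t:ℂ) - (s:ℂ))) * σ₁ s * z s‖
      ≤ Real.exp (2*r) * C * (∫ s in (0:ℝ)..1, ‖σ₁ s‖) := by
  have hC0 : 0 ≤ C := le_trans (norm_nonneg _) (hC 0 ⟨le_rfl, zero_le_one⟩)
  calc ‖∫ s in (0:ℝ)..t, Complex.exp (2 * Complex.I * μ * ((t:ℂ) - (s:ℂ))) * σ₁ s * z s‖
      ≤ ∫ s in (0:ℝ)..t, ‖Complex.exp (2 * Complex.I * μ * ((t:ℂ) - (s:ℂ))) * σ₁ s * z s‖ :=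
        intervalIntegral.norm_integral_le_integral_norm ht.1
    _ ≤ ∫ s in (0:ℝ)..t, Real.exp (2*r) * C * ‖σ₁ s‖ := by
        apply intervalIntegral.integral_mono_on ht.1
          ((innerII2 hi1 hz le_rfl ht.1 ht.2).norm)
          (((II hi1.norm le_rfl ht.1 ht.2)).const_mul _)
        intro s hs
        rw [norm_mul, norm_mul]
        have h1 : ‖Complex.exp (2 * Complex.I * μ * ((t:ℂ) - (s:ℂ)))‖ ≤ Real.exp (2*r) := by
          exact expNormBound (μ := μ) hr hμ hs.2 (by
            have := ht.2; have := hs.1; linarith)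
        have h2 : ‖z s‖ ≤ C := hC s ⟨hs.1, hs.2.trans ht.2⟩
        calc ‖Complex.exp (2 * Complex.I * μ * ((t:ℂ) - (s:ℂ)))‖ * ‖σ₁ s‖ * ‖z s‖
            ≤ (Real.exp (2*r) * ‖σ₁ s‖) * C :=
              mul_le_mul (mul_le_mul_of_nonneg_right h1 (norm_nonneg _)) h2
                (norm_nonneg _) (by positivity)
          _ = Real.exp (2*r) * C * ‖σ₁ s‖ := by ring
    _ ≤ ∫ s in (0:ℝ)..1, Real.exp (2*r) * C * ‖σ₁ s‖ := by
        apply intervalIntegral.integral_mono_interval le_rfl ht.1 ht.2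
        · filter_upwards with s
          positivity
        · exact ((II hi1.norm le_rfl zero_le_one le_rfl)).const_mul _
    _ = Real.exp (2*r) * C * (∫ s in (0:ℝ)..1, ‖σ₁ s‖) := by
        rw [intervalIntegral.integral_const_mul]

lemma K2bound (hr : 0 ≤ r) (hμ : -r < μ.im)
    (hi1 : IntegrableOn σ₁ (Icc (0:ℝ) 1) volume)
    (hi2 : IntegrableOn σ₂ (Icc (0:ℝ) 1) volume)
    (hz : ContinuousOn z (Icc (0:ℝ) 1)) {C : ℝ}
    (hC : ∀ s ∈ Icc (0:ℝ) 1, ‖z s‖ ≤ C) {x : ℝ} (hx : x ∈ Icc (0:ℝ) 1) :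
    ‖K2 σ₁ σ₂ μ z x‖
      ≤ (Real.exp (2*r) * (∫ s in (0:ℝ)..1, ‖σ₁ s‖) * (∫ s in (0:ℝ)..1, ‖σ₂ s‖)) * C := by
  have hC0 : 0 ≤ C := le_trans (norm_nonneg _) (hC 0 ⟨le_rfl, zero_le_one⟩)
  have hSS1 : 0 ≤ ∫ s in (0:ℝ)..1, ‖σ₁ s‖ :=
    intervalIntegral.integral_nonneg zero_le_one (fun s _ => norm_nonneg _)
  calc ‖K2 σ₁ σ₂ μ z x‖
      ≤ ∫ t in x..(1:ℝ), ‖σ₂ t * ∫ s in (0:ℝ)..t,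
          Complex.exp (2 * Complex.I * μ * ((t:ℂ) - (s:ℂ))) * σ₁ s * z s‖ :=
        intervalIntegral.norm_integral_le_integral_norm hx.2
    _ ≤ ∫ t in x..(1:ℝ), ‖σ₂ t‖ * (Real.exp (2*r) * C * (∫ s in (0:ℝ)..1, ‖σ₁ s‖)) := by
        apply intervalIntegral.integral_mono_on hx.2
          ((II (outerInt2 hi1 hi2 hz) hx.1 hx.2 le_rfl).norm)
          ((II hi2.norm hx.1 hx.2 le_rfl).mul_const _)
        intro t ht
        rw [norm_mul]
        apply mul_le_mul_of_nonneg_left _ (norm_nonneg _)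
        exact innerBound2 hr hμ hi1 hz hC ⟨hx.1.trans ht.1, ht.2⟩
    _ = (∫ t in x..(1:ℝ), ‖σ₂ t‖) * (Real.exp (2*r) * C * (∫ s in (0:ℝ)..1, ‖σ₁ s‖)) := by
        rw [intervalIntegral.integral_mul_const]
    _ ≤ (∫ t in (0:ℝ)..1, ‖σ₂ t‖) * (Real.exp (2*r) * C * (∫ s in (0:ℝ)..1, ‖σ₁ s‖)) := by
        apply mul_le_mul_of_nonneg_right _ (by positivity)
        apply intervalIntegral.integral_mono_interval hx.1 hx.2 le_rfl
        · filter_upwards with s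
          exact norm_nonneg _
        · exact II hi2.norm le_rfl zero_le_one le_rfl
    _ = (Real.exp (2*r) * (∫ s in (0:ℝ)..1, ‖σ₁ s‖) * (∫ s in (0:ℝ)..1, ‖σ₂ s‖)) * C := by
        ring

lemma K2congr (σ₁ σ₂ : ℝ → ℂ) (μ : ℂ) (z w : ℝ → ℂ)
    (h : ∀ y ∈ Icc (0:ℝ) 1, z y = w y) {x : ℝ} (hx : x ∈ Icc (0:ℝ) 1) :
    K2 σ₁ σ₂ μ z x = K2 σ₁ σ₂ μ w x := by
  simp only [K2]
  apply intervalIntegral.integral_congr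
  intro t ht
  rw [uIcc_of_le hx.2] at ht
  dsimp only
  congr 1
  apply intervalIntegral.integral_congr
  intro s hs
  rw [uIcc_of_le (hx.1.trans ht.1)] at hs
  dsimp only
  rw [h s ⟨hs.1, hs.2.trans ht.2⟩]

lemma K2add (hi1 : IntegrableOn σ₁ (Icc (0:ℝ) 1) volume)
    (hi2 : IntegrableOn σ₂ (Icc (0:ℝ) 1) volume)
    {w : ℝ → ℂ} (hz : ContinuousOn z (Icc (0:ℝ) 1)) (hw : ContinuousOn w (Icc (0:ℝ) 1))
    (c : ℂ) {x : ℝ} (hx : x ∈ Icc (0:ℝ) 1) :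
    K2 σ₁ σ₂ μ (fun y => z y + c * w y) x = K2 σ₁ σ₂ μ z x + c * K2 σ₁ σ₂ μ w x := by
  have hinner : ∀ t ∈ Icc (0:ℝ) 1,
      (∫ s in (0:ℝ)..t, Complex.exp (2 * Complex.I * μ * ((t:ℂ) - (s:ℂ))) * σ₁ s
          * (z s + c * w s))
        = (∫ s in (0:ℝ)..t, Complex.exp (2 * Complex.I * μ * ((t:ℂ) - (s:ℂ))) * σ₁ s * z s)
          + c * ∫ s in (0:ℝ)..t, Complex.exp (2 * Complex.I * μ * ((t:ℂ) - (s:ℂ))) * σ₁ s * w s := by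
    intro t ht
    rw [show (fun s : ℝ => Complex.exp (2 * Complex.I * μ * ((t:ℂ) - (s:ℂ))) * σ₁ s * (z s + c * w s))
        = fun s : ℝ => (Complex.exp (2 * Complex.I * μ * ((t:ℂ) - (s:ℂ))) * σ₁ s * z s)
          + c * (Complex.exp (2 * Complex.I * μ * ((t:ℂ) - (s:ℂ))) * σ₁ s * w s) from
        funext fun s => by ring]
    rw [intervalIntegral.integral_add (innerII2 hi1 hz le_rfl ht.1 ht.2)
      ((innerII2 hi1 hw le_rfl ht.1 ht.2).const_mul c),
      intervalIntegral.integral_const_mul]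
  simp only [K2]
  have houter : ∀ t ∈ Icc x 1,
      σ₂ t * (∫ s in (0:ℝ)..t, Complex.exp (2 * Complex.I * μ * ((t:ℂ) - (s:ℂ))) * σ₁ s
          * (z s + c * w s))
        = σ₂ t * (∫ s in (0:ℝ)..t, Complex.exp (2 * Complex.I * μ * ((t:ℂ) - (s:ℂ))) * σ₁ s * z s)
          + c * (σ₂ t * ∫ s in (0:ℝ)..t, Complex.exp (2 * Complex.I * μ * ((t:ℂ) - (s:ℂ))) * σ₁ s * w s) := by
    intro t ht
    rw [hinner t ⟨hx.1.trans ht.1, ht.2⟩]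
    ring
  rw [intervalIntegral.integral_congr (g := fun t : ℝ =>
      σ₂ t * (∫ s in (0:ℝ)..t, Complex.exp (2 * Complex.I * μ * ((t:ℂ) - (s:ℂ))) * σ₁ s * z s)
        + c * (σ₂ t * ∫ s in (0:ℝ)..t, Complex.exp (2 * Complex.I * μ * ((t:ℂ) - (s:ℂ))) * σ₁ s * w s))
    (by rw [uIcc_of_le hx.2]; exact houter)]
  rw [intervalIntegral.integral_add (II (outerInt2 hi1 hi2 hz) hx.1 hx.2 le_rfl)
    ((II (outerInt2 hi1 hi2 hw) hx.1 hx.2 le_rfl).const_mul c),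
    intervalIntegral.integral_const_mul]

lemma K2smul (hi1 : IntegrableOn σ₁ (Icc (0:ℝ) 1) volume)
    (hi2 : IntegrableOn σ₂ (Icc (0:ℝ) 1) volume)
    (hz : ContinuousOn z (Icc (0:ℝ) 1)) (c : ℂ) {x : ℝ} (hx : x ∈ Icc (0:ℝ) 1) :
    K2 σ₁ σ₂ μ (fun y => c * z y) x = c * K2 σ₁ σ₂ μ z x := by
  have h0 : ∀ y ∈ Icc (0:ℝ) 1, c * z y = (fun y : ℝ => (fun _ : ℝ => (0:ℂ)) y + c * z y) y := by
    intro y _; simp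
  rw [K2congr σ₁ σ₂ μ _ _ h0 hx,
    K2add (z := fun _ : ℝ => (0:ℂ)) hi1 hi2 continuous_const.continuousOn hz c hx]
  have hz0 : K2 σ₁ σ₂ μ (fun _ : ℝ => (0:ℂ)) x = 0 := by
    simp [K2]
  rw [hz0]
  ring

end K2side
section K2sq

variable {σ₁ σ₂ : ℝ → ℂ} {μ : ℂ} {r : ℝ} {z : ℝ → ℂ}

lemma Fint2 (hi1 : IntegrableOn σ₁ (Icc (0:ℝ) 1) volume) (t : ℝ) :
    IntegrableOn (fun s : ℝ => Complex.exp (2 * Complex.I * μ * ((t:ℂ) - (s:ℂ))) * σ₁ s)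
      (Icc (0:ℝ) 1) volume := by
  have h1 : IntegrableOn (fun s : ℝ => Complex.exp (2 * Complex.I * μ * (-(s:ℂ))) * σ₁ s)
      (Icc (0:ℝ) 1) volume :=
    IntegrableOn.continuousOn_mul
      ((continuous_const.mul Complex.continuous_ofReal.neg).cexp).continuousOn hi1 isCompact_Icc
  have heq : (fun s : ℝ => Complex.exp (2 * Complex.I * μ * ((t:ℂ) - (s:ℂ))) * σ₁ s)
      = fun s : ℝ => Complex.exp (2 * Complex.I * μ * (t:ℂ))
          * (Complex.exp (2 * Complex.I * μ * (-(s:ℂ))) * σ₁ s) := by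
    funext s; rw [expSplit0']; ring
  rw [heq]
  exact h1.const_mul _

/-- The kernel-swap identity for `K2 (K2 z)`. -/
lemma IN_eq2 (hi1 : IntegrableOn σ₁ (Icc (0:ℝ) 1) volume)
    (hi2 : IntegrableOn σ₂ (Icc (0:ℝ) 1) volume)
    (hz : ContinuousOn z (Icc (0:ℝ) 1)) {t : ℝ} (ht : t ∈ Icc (0:ℝ) 1) :
    (∫ s in (0:ℝ)..t, Complex.exp (2 * Complex.I * μ * ((t:ℂ) - (s:ℂ))) * σ₁ s
        * (K2 σ₁ σ₂ μ z s))
      = ∫ u in (0:ℝ)..1,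
          (σ₂ u * ∫ v in (0:ℝ)..u, Complex.exp (2 * Complex.I * μ * ((u:ℂ) - (v:ℂ))) * σ₁ v * z v)
            * ∫ s in (0:ℝ)..(min t u), Complex.exp (2 * Complex.I * μ * ((t:ℂ) - (s:ℂ))) * σ₁ s := by
  have h := swap_tri2 (t := t)
    (F := fun s : ℝ => Complex.exp (2 * Complex.I * μ * ((t:ℂ) - (s:ℂ))) * σ₁ s)
    (G := fun u : ℝ => σ₂ u * ∫ v in (0:ℝ)..u,
      Complex.exp (2 * Complex.I * μ * ((u:ℂ) - (v:ℂ))) * σ₁ v * z v)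
    ht.1 ht.2 (Fint2 hi1 t) (outerInt2 hi1 hi2 hz)
  calc (∫ s in (0:ℝ)..t, Complex.exp (2 * Complex.I * μ * ((t:ℂ) - (s:ℂ))) * σ₁ s
        * (K2 σ₁ σ₂ μ z s))
      = ∫ s in (0:ℝ)..t,
          (Complex.exp (2 * Complex.I * μ * ((t:ℂ) - (s:ℂ))) * σ₁ s)
            * ∫ u in s..(1:ℝ), (σ₂ u * ∫ v in (0:ℝ)..u,
              Complex.exp (2 * Complex.I * μ * ((u:ℂ) - (v:ℂ))) * σ₁ v * z v) := by
        apply intervalIntegral.integral_congr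
        intro s _
        simp only [K2]
    _ = _ := h

lemma headCont2 (hi1 : IntegrableOn σ₁ (Icc (0:ℝ) 1) volume) {t : ℝ} (ht : t ∈ Icc (0:ℝ) 1) :
    ContinuousOn (fun u : ℝ => ∫ s in (0:ℝ)..(min t u),
      Complex.exp (2 * Complex.I * μ * ((t:ℂ) - (s:ℂ))) * σ₁ s) (Icc (0:ℝ) 1) := by
  have hFi := Fint2 (μ := μ) hi1 t
  have hprim : ContinuousOn (fun y : ℝ => ∫ s in (0:ℝ)..y,
      Complex.exp (2 * Complex.I * μ * ((t:ℂ) - (s:ℂ))) * σ₁ s) (Icc (0:ℝ) 1) := by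
    have h := intervalIntegral.continuousOn_primitive_interval
      (a := (0:ℝ)) (b := (1:ℝ)) (μ := volume)
      (f := fun s : ℝ => Complex.exp (2 * Complex.I * μ * ((t:ℂ) - (s:ℂ))) * σ₁ s) ?_
    · rwa [uIcc_of_le zero_le_one] at h
    · rw [uIcc_of_le zero_le_one]; exact hFi
  have hmin : ContinuousOn (fun u : ℝ => min t u) (Icc (0:ℝ) 1) :=
    (continuous_const.min continuous_id).continuousOn
  have hmaps : MapsTo (fun u : ℝ => min t u) (Icc (0:ℝ) 1) (Icc (0:ℝ) 1) := by
    intro u hu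
    exact ⟨le_min ht.1 hu.1, le_trans (min_le_left _ _) ht.2⟩
  exact hprim.comp hmin hmaps

lemma headBound2 (hr : 0 ≤ r) (hμ : -r < μ.im)
    {t u : ℝ} (ht : t ∈ Icc (0:ℝ) 1) (hu : u ∈ Icc (0:ℝ) 1) :
    ‖∫ s in (0:ℝ)..(min t u), Complex.exp (2 * Complex.I * μ * ((t:ℂ) - (s:ℂ))) * σ₁ s‖
      ≤ Real.exp (2*r) * gamma01 σ₁ μ (min t u) := by
  have hsplit : (fun s : ℝ => Complex.exp (2 * Complex.I * μ * ((t:ℂ) - (s:ℂ))) * σ₁ s)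
      = fun s : ℝ => Complex.exp (2 * Complex.I * μ * ((t:ℂ) - ((min t u : ℝ):ℂ)))
          * (Complex.exp (2 * Complex.I * μ * (((min t u : ℝ):ℂ) - (s:ℂ))) * σ₁ s) := by
    funext s
    rw [expSplit μ t s (min t u)]
    ring
  rw [hsplit, intervalIntegral.integral_const_mul, norm_mul]
  have h1 : ‖Complex.exp (2 * Complex.I * μ * ((t:ℂ) - ((min t u : ℝ):ℂ)))‖ ≤ Real.exp (2*r) :=
    expNormBound hr hμ (min_le_left _ _) (by
      have := le_min ht.1 hu.1
      linarith [ht.2])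
  have h2 : ‖∫ s in (0:ℝ)..(min t u),
      Complex.exp (2 * Complex.I * μ * (((min t u : ℝ):ℂ) - (s:ℂ))) * σ₁ s‖
        = gamma01 σ₁ μ (min t u) := by
    simp only [gamma01]
  rw [h2]
  exact mul_le_mul_of_nonneg_right h1 (g01_nn σ₁ μ _)

lemma sig2g01Int (hi1 : IntegrableOn σ₁ (Icc (0:ℝ) 1) volume)
    (hi2 : IntegrableOn σ₂ (Icc (0:ℝ) 1) volume) :
    IntegrableOn (fun u : ℝ => ‖σ₂ u‖ * gamma01 σ₁ μ u) (Icc (0:ℝ) 1) volume :=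
  IntegrableOn.mul_continuousOn hi2.norm (g01_cont hi1) isCompact_Icc

lemma sig2g01sqInt (hi1 : IntegrableOn σ₁ (Icc (0:ℝ) 1) volume)
    (hi2 : IntegrableOn σ₂ (Icc (0:ℝ) 1) volume) :
    IntegrableOn (fun u : ℝ => ‖σ₂ u‖ * (gamma01 σ₁ μ u)^2) (Icc (0:ℝ) 1) volume :=
  IntegrableOn.mul_continuousOn hi2.norm ((g01_cont hi1).pow 2) isCompact_Icc

lemma K2sqBound (hr : 0 ≤ r) (hμ : -r < μ.im)
    (hi1 : IntegrableOn σ₁ (Icc (0:ℝ) 1) volume)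
    (hi2 : IntegrableOn σ₂ (Icc (0:ℝ) 1) volume)
    (hz : ContinuousOn z (Icc (0:ℝ) 1)) {C : ℝ}
    (hC : ∀ s ∈ Icc (0:ℝ) 1, ‖z s‖ ≤ C) {x : ℝ} (hx : x ∈ Icc (0:ℝ) 1) :
    ‖K2 σ₁ σ₂ μ (K2 σ₁ σ₂ μ z) x‖
      ≤ 2 * Real.exp (2*r) * Real.exp (2*r) * C * (∫ s in (0:ℝ)..1, ‖σ₁ s‖)
          * (∫ s in (0:ℝ)..1, ‖σ₂ s‖) * (∫ u in (0:ℝ)..1, ‖σ₂ u‖ * gamma01 σ₁ μ u) := by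
  have hC0 : 0 ≤ C := le_trans (norm_nonneg _) (hC 0 ⟨le_rfl, zero_le_one⟩)
  set SS1 : ℝ := ∫ s in (0:ℝ)..1, ‖σ₁ s‖ with hSS1def
  set SS2 : ℝ := ∫ s in (0:ℝ)..1, ‖σ₂ s‖ with hSS2def
  set Hol : ℝ := ∫ u in (0:ℝ)..1, ‖σ₂ u‖ * gamma01 σ₁ μ u with hHoldef
  have hSS1 : 0 ≤ SS1 := intervalIntegral.integral_nonneg zero_le_one (fun s _ => norm_nonneg _)
  have hSS2 : 0 ≤ SS2 := intervalIntegral.integral_nonneg zero_le_one (fun s _ => norm_nonneg _)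
  have hHol : 0 ≤ Hol := intervalIntegral.integral_nonneg zero_le_one
    (fun s _ => mul_nonneg (norm_nonneg _) (g01_nn σ₁ μ s))
  set B : ℝ := Real.exp (2*r) * C * SS1 with hBdef
  have hB : 0 ≤ B := by positivity
  have hKz := K2cont (μ := μ) hi1 hi2 hz
  have hIN : ∀ t ∈ Icc (0:ℝ) 1,
      ‖∫ s in (0:ℝ)..t, Complex.exp (2 * Complex.I * μ * ((t:ℂ) - (s:ℂ))) * σ₁ s
          * (K2 σ₁ σ₂ μ z s)‖
        ≤ Real.exp (2*r) * B * (gamma01 σ₁ μ t * SS2 + Hol) := by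
    intro t ht
    rw [IN_eq2 hi1 hi2 hz ht]
    have hfTL : IntervalIntegrable (fun u : ℝ =>
        (σ₂ u * ∫ v in (0:ℝ)..u, Complex.exp (2 * Complex.I * μ * ((u:ℂ) - (v:ℂ))) * σ₁ v * z v)
          * ∫ s in (0:ℝ)..(min t u), Complex.exp (2 * Complex.I * μ * ((t:ℂ) - (s:ℂ))) * σ₁ s)
        volume 0 1 :=
      II ((outerInt2 hi1 hi2 hz).mul_continuousOn (headCont2 hi1 ht) isCompact_Icc)
        le_rfl zero_le_one le_rfl
    calc ‖∫ u in (0:ℝ)..1,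
        (σ₂ u * ∫ v in (0:ℝ)..u, Complex.exp (2 * Complex.I * μ * ((u:ℂ) - (v:ℂ))) * σ₁ v * z v)
          * ∫ s in (0:ℝ)..(min t u), Complex.exp (2 * Complex.I * μ * ((t:ℂ) - (s:ℂ))) * σ₁ s‖
        ≤ ∫ u in (0:ℝ)..1, ‖(σ₂ u * ∫ v in (0:ℝ)..u,
            Complex.exp (2 * Complex.I * μ * ((u:ℂ) - (v:ℂ))) * σ₁ v * z v)
          * ∫ s in (0:ℝ)..(min t u), Complex.exp (2 * Complex.I * μ * ((t:ℂ) - (s:ℂ))) * σ₁ s‖ :=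
          intervalIntegral.norm_integral_le_integral_norm zero_le_one
      _ ≤ ∫ u in (0:ℝ)..1, ‖σ₂ u‖ * (B * (Real.exp (2*r)
            * (gamma01 σ₁ μ t + gamma01 σ₁ μ u))) := by
          apply intervalIntegral.integral_mono_on zero_le_one hfTL.norm
          · exact II (IntegrableOn.mul_continuousOn hi2.norm (continuousOn_const.mul
              (continuousOn_const.mul (continuousOn_const.add (g01_cont hi1))))
              isCompact_Icc) le_rfl zero_le_one le_rfl
          intro u hu
          rw [norm_mul, norm_mul]
          have h1 : ‖∫ v in (0:ℝ)..u,
              Complex.exp (2 * Complex.I * μ * ((u:ℂ) - (v:ℂ))) * σ₁ v * z v‖ ≤ B :=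
            innerBound2 hr hμ hi1 hz hC hu
          have h2 : ‖∫ s in (0:ℝ)..(min t u),
              Complex.exp (2 * Complex.I * μ * ((t:ℂ) - (s:ℂ))) * σ₁ s‖
                ≤ Real.exp (2*r) * (gamma01 σ₁ μ t + gamma01 σ₁ μ u) := by
            calc ‖∫ s in (0:ℝ)..(min t u),
                Complex.exp (2 * Complex.I * μ * ((t:ℂ) - (s:ℂ))) * σ₁ s‖
                ≤ Real.exp (2*r) * gamma01 σ₁ μ (min t u) := headBound2 hr hμ ht hu
              _ ≤ Real.exp (2*r) * (gamma01 σ₁ μ t + gamma01 σ₁ μ u) :=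
                  mul_le_mul_of_nonneg_left (g01_min σ₁ μ t u) (Real.exp_nonneg _)
          calc ‖σ₂ u‖ * ‖∫ v in (0:ℝ)..u,
              Complex.exp (2 * Complex.I * μ * ((u:ℂ) - (v:ℂ))) * σ₁ v * z v‖
              * ‖∫ s in (0:ℝ)..(min t u),
                  Complex.exp (2 * Complex.I * μ * ((t:ℂ) - (s:ℂ))) * σ₁ s‖
              ≤ ‖σ₂ u‖ * B * (Real.exp (2*r) * (gamma01 σ₁ μ t + gamma01 σ₁ μ u)) := by
                apply mul_le_mul (mul_le_mul_of_nonneg_left h1 (norm_nonneg _)) h2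
                  (norm_nonneg _)
                positivity
            _ = ‖σ₂ u‖ * (B * (Real.exp (2*r) * (gamma01 σ₁ μ t + gamma01 σ₁ μ u))) := by
                ring
      _ = Real.exp (2*r) * B * (gamma01 σ₁ μ t * SS2 + Hol) := by
          rw [show (fun u : ℝ => ‖σ₂ u‖ * (B * (Real.exp (2*r)
              * (gamma01 σ₁ μ t + gamma01 σ₁ μ u))))
            = fun u : ℝ => (B * Real.exp (2*r) * gamma01 σ₁ μ t) * ‖σ₂ u‖
                + (B * Real.exp (2*r)) * (‖σ₂ u‖ * gamma01 σ₁ μ u) from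
            funext fun u => by ring]
          rw [intervalIntegral.integral_add
            ((II hi2.norm le_rfl zero_le_one le_rfl).const_mul _)
            ((II (sig2g01Int hi1 hi2) le_rfl zero_le_one le_rfl).const_mul _),
            intervalIntegral.integral_const_mul, intervalIntegral.integral_const_mul]
          rw [← hSS2def, ← hHoldef]
          ring
  calc ‖K2 σ₁ σ₂ μ (K2 σ₁ σ₂ μ z) x‖
      ≤ ∫ t in x..(1:ℝ), ‖σ₂ t * ∫ s in (0:ℝ)..t,
          Complex.exp (2 * Complex.I * μ * ((t:ℂ) - (s:ℂ))) * σ₁ s * (K2 σ₁ σ₂ μ z s)‖ :=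
        intervalIntegral.norm_integral_le_integral_norm hx.2
    _ ≤ ∫ t in x..(1:ℝ), ‖σ₂ t‖ * (Real.exp (2*r) * B * (gamma01 σ₁ μ t * SS2 + Hol)) := by
        apply intervalIntegral.integral_mono_on hx.2
          ((II (outerInt2 hi1 hi2 hKz) hx.1 hx.2 le_rfl).norm)
          (II (IntegrableOn.mul_continuousOn hi2.norm (continuousOn_const.mul
            ((g01_cont hi1).mul continuousOn_const |>.add continuousOn_const))
            isCompact_Icc) hx.1 hx.2 le_rfl)
        intro t ht
        rw [norm_mul]
        exact mul_le_mul_of_nonneg_left (hIN t ⟨hx.1.trans ht.1, ht.2⟩) (norm_nonneg _)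
    _ ≤ ∫ t in (0:ℝ)..1, ‖σ₂ t‖ * (Real.exp (2*r) * B * (gamma01 σ₁ μ t * SS2 + Hol)) := by
        apply intervalIntegral.integral_mono_interval hx.1 hx.2 le_rfl
        · filter_upwards [MeasureTheory.ae_restrict_mem measurableSet_Ioc] with t ht
          have := g01_nn σ₁ μ t
          positivity
        · exact II (IntegrableOn.mul_continuousOn hi2.norm (continuousOn_const.mul
            ((g01_cont hi1).mul continuousOn_const |>.add continuousOn_const))
            isCompact_Icc) le_rfl zero_le_one le_rfl
    _ = 2 * Real.exp (2*r) * Real.exp (2*r) * C * SS1 * SS2 * Hol := by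
        rw [show (fun t : ℝ => ‖σ₂ t‖ * (Real.exp (2*r) * B * (gamma01 σ₁ μ t * SS2 + Hol)))
            = fun t : ℝ => (Real.exp (2*r) * B * SS2) * (‖σ₂ t‖ * gamma01 σ₁ μ t)
                + (Real.exp (2*r) * B * Hol) * ‖σ₂ t‖ from
          funext fun t => by ring]
        rw [intervalIntegral.integral_add
          ((II (sig2g01Int hi1 hi2) le_rfl zero_le_one le_rfl).const_mul _)
          ((II hi2.norm le_rfl zero_le_one le_rfl).const_mul _),
          intervalIntegral.integral_const_mul, intervalIntegral.integral_const_mul]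
        rw [← hSS2def, ← hHoldef, hBdef]
        ring

lemma K2sqE (hr : 0 ≤ r) (hμ : -r < μ.im)
    (hi1 : IntegrableOn σ₁ (Icc (0:ℝ) 1) volume)
    (hi2 : IntegrableOn σ₂ (Icc (0:ℝ) 1) volume) {x : ℝ} (hx : x ∈ Icc (0:ℝ) 1) :
    ‖K2 σ₁ σ₂ μ (K2 σ₁ σ₂ μ eFun) x‖
      ≤ 2 * Real.exp (2*r) * (∫ s in (0:ℝ)..1, ‖σ₂ s‖)
          * (∫ u in (0:ℝ)..1, ‖σ₂ u‖ * (gamma01 σ₁ μ u)^2) := by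
  have hze : ContinuousOn eFun (Icc (0:ℝ) 1) := continuous_const.continuousOn
  set SS2 : ℝ := ∫ s in (0:ℝ)..1, ‖σ₂ s‖ with hSS2def
  set G1 : ℝ := ∫ u in (0:ℝ)..1, ‖σ₂ u‖ * (gamma01 σ₁ μ u)^2 with hG1def
  have hSS2 : 0 ≤ SS2 := intervalIntegral.integral_nonneg zero_le_one (fun s _ => norm_nonneg _)
  have hG1 : 0 ≤ G1 := intervalIntegral.integral_nonneg zero_le_one
    (fun s _ => mul_nonneg (norm_nonneg _) (sq_nonneg _))
  have hKz := K2cont (μ := μ) hi1 hi2 hze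
  have hIN : ∀ t ∈ Icc (0:ℝ) 1,
      ‖∫ s in (0:ℝ)..t, Complex.exp (2 * Complex.I * μ * ((t:ℂ) - (s:ℂ))) * σ₁ s
          * (K2 σ₁ σ₂ μ eFun s)‖
        ≤ Real.exp (2*r) * ((1/2) * (gamma01 σ₁ μ t)^2 * SS2 + (3/2) * G1) := by
    intro t ht
    rw [IN_eq2 hi1 hi2 hze ht]
    have hfTL : IntervalIntegrable (fun u : ℝ =>
        (σ₂ u * ∫ v in (0:ℝ)..u, Complex.exp (2 * Complex.I * μ * ((u:ℂ) - (v:ℂ))) * σ₁ v * eFun v)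
          * ∫ s in (0:ℝ)..(min t u), Complex.exp (2 * Complex.I * μ * ((t:ℂ) - (s:ℂ))) * σ₁ s)
        volume 0 1 :=
      II ((outerInt2 hi1 hi2 hze).mul_continuousOn (headCont2 hi1 ht) isCompact_Icc)
        le_rfl zero_le_one le_rfl
    calc ‖∫ u in (0:ℝ)..1,
        (σ₂ u * ∫ v in (0:ℝ)..u, Complex.exp (2 * Complex.I * μ * ((u:ℂ) - (v:ℂ))) * σ₁ v * eFun v)
          * ∫ s in (0:ℝ)..(min t u), Complex.exp (2 * Complex.I * μ * ((t:ℂ) - (s:ℂ))) * σ₁ s‖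
        ≤ ∫ u in (0:ℝ)..1, ‖(σ₂ u * ∫ v in (0:ℝ)..u,
            Complex.exp (2 * Complex.I * μ * ((u:ℂ) - (v:ℂ))) * σ₁ v * eFun v)
          * ∫ s in (0:ℝ)..(min t u), Complex.exp (2 * Complex.I * μ * ((t:ℂ) - (s:ℂ))) * σ₁ s‖ :=
          intervalIntegral.norm_integral_le_integral_norm zero_le_one
      _ ≤ ∫ u in (0:ℝ)..1, ‖σ₂ u‖ * (Real.exp (2*r)
            * ((1/2) * (gamma01 σ₁ μ t)^2 + (3/2) * (gamma01 σ₁ μ u)^2)) := by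
          apply intervalIntegral.integral_mono_on zero_le_one hfTL.norm
          · exact II (IntegrableOn.mul_continuousOn hi2.norm (continuousOn_const.mul
              ((continuousOn_const.mul continuousOn_const).add
                (continuousOn_const.mul ((g01_cont hi1).pow 2))))
              isCompact_Icc) le_rfl zero_le_one le_rfl
          intro u hu
          rw [norm_mul, norm_mul]
          have h1 : ‖∫ v in (0:ℝ)..u,
              Complex.exp (2 * Complex.I * μ * ((u:ℂ) - (v:ℂ))) * σ₁ v * eFun v‖
                = gamma01 σ₁ μ u := (g01_eq σ₁ μ u).symm
          have h2 : ‖∫ s in (0:ℝ)..(min t u),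
              Complex.exp (2 * Complex.I * μ * ((t:ℂ) - (s:ℂ))) * σ₁ s‖
                ≤ Real.exp (2*r) * (gamma01 σ₁ μ t + gamma01 σ₁ μ u) := by
            calc ‖∫ s in (0:ℝ)..(min t u),
                Complex.exp (2 * Complex.I * μ * ((t:ℂ) - (s:ℂ))) * σ₁ s‖
                ≤ Real.exp (2*r) * gamma01 σ₁ μ (min t u) := headBound2 hr hμ ht hu
              _ ≤ Real.exp (2*r) * (gamma01 σ₁ μ t + gamma01 σ₁ μ u) :=
                  mul_le_mul_of_nonneg_left (g01_min σ₁ μ t u) (Real.exp_nonneg _)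
          rw [h1]
          have hkey : gamma01 σ₁ μ u * (gamma01 σ₁ μ t + gamma01 σ₁ μ u)
              ≤ (1/2) * (gamma01 σ₁ μ t)^2 + (3/2) * (gamma01 σ₁ μ u)^2 := by
            nlinarith [sq_nonneg (gamma01 σ₁ μ t - gamma01 σ₁ μ u)]
          calc ‖σ₂ u‖ * gamma01 σ₁ μ u
              * ‖∫ s in (0:ℝ)..(min t u),
                  Complex.exp (2 * Complex.I * μ * ((t:ℂ) - (s:ℂ))) * σ₁ s‖
              ≤ ‖σ₂ u‖ * gamma01 σ₁ μ u * (Real.exp (2*r)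
                  * (gamma01 σ₁ μ t + gamma01 σ₁ μ u)) := by
                apply mul_le_mul_of_nonneg_left h2
                exact mul_nonneg (norm_nonneg _) (g01_nn σ₁ μ u)
            _ = Real.exp (2*r) * (‖σ₂ u‖ * (gamma01 σ₁ μ u
                  * (gamma01 σ₁ μ t + gamma01 σ₁ μ u))) := by ring
            _ ≤ Real.exp (2*r) * (‖σ₂ u‖ * ((1/2) * (gamma01 σ₁ μ t)^2
                  + (3/2) * (gamma01 σ₁ μ u)^2)) := by
                apply mul_le_mul_of_nonneg_left _ (Real.exp_nonneg _)
                exact mul_le_mul_of_nonneg_left hkey (norm_nonneg _)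
            _ = ‖σ₂ u‖ * (Real.exp (2*r)
                  * ((1/2) * (gamma01 σ₁ μ t)^2 + (3/2) * (gamma01 σ₁ μ u)^2)) := by ring
      _ = Real.exp (2*r) * ((1/2) * (gamma01 σ₁ μ t)^2 * SS2 + (3/2) * G1) := by
          rw [show (fun u : ℝ => ‖σ₂ u‖ * (Real.exp (2*r)
              * ((1/2) * (gamma01 σ₁ μ t)^2 + (3/2) * (gamma01 σ₁ μ u)^2)))
            = fun u : ℝ => (Real.exp (2*r) * ((1/2) * (gamma01 σ₁ μ t)^2)) * ‖σ₂ u‖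
                + (Real.exp (2*r) * (3/2)) * (‖σ₂ u‖ * (gamma01 σ₁ μ u)^2) from
            funext fun u => by ring]
          rw [intervalIntegral.integral_add
            ((II hi2.norm le_rfl zero_le_one le_rfl).const_mul _)
            ((II (sig2g01sqInt hi1 hi2) le_rfl zero_le_one le_rfl).const_mul _),
            intervalIntegral.integral_const_mul, intervalIntegral.integral_const_mul]
          rw [← hSS2def, ← hG1def]
          ring
  calc ‖K2 σ₁ σ₂ μ (K2 σ₁ σ₂ μ eFun) x‖
      ≤ ∫ t in x..(1:ℝ), ‖σ₂ t * ∫ s in (0:ℝ)..t,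
          Complex.exp (2 * Complex.I * μ * ((t:ℂ) - (s:ℂ))) * σ₁ s * (K2 σ₁ σ₂ μ eFun s)‖ :=
        intervalIntegral.norm_integral_le_integral_norm hx.2
    _ ≤ ∫ t in x..(1:ℝ), ‖σ₂ t‖ * (Real.exp (2*r)
          * ((1/2) * (gamma01 σ₁ μ t)^2 * SS2 + (3/2) * G1)) := by
        apply intervalIntegral.integral_mono_on hx.2
          ((II (outerInt2 hi1 hi2 hKz) hx.1 hx.2 le_rfl).norm)
          (II (IntegrableOn.mul_continuousOn hi2.norm (continuousOn_const.mul
            (((continuousOn_const.mul ((g01_cont hi1).pow 2)).mul continuousOn_const).add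
              continuousOn_const)) isCompact_Icc) hx.1 hx.2 le_rfl)
        intro t ht
        rw [norm_mul]
        exact mul_le_mul_of_nonneg_left (hIN t ⟨hx.1.trans ht.1, ht.2⟩) (norm_nonneg _)
    _ ≤ ∫ t in (0:ℝ)..1, ‖σ₂ t‖ * (Real.exp (2*r)
          * ((1/2) * (gamma01 σ₁ μ t)^2 * SS2 + (3/2) * G1)) := by
        apply intervalIntegral.integral_mono_interval hx.1 hx.2 le_rfl
        · filter_upwards [MeasureTheory.ae_restrict_mem measurableSet_Ioc] with t ht
          have := g01_nn σ₁ μ t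
          positivity
        · exact II (IntegrableOn.mul_continuousOn hi2.norm (continuousOn_const.mul
            (((continuousOn_const.mul ((g01_cont hi1).pow 2)).mul continuousOn_const).add
              continuousOn_const)) isCompact_Icc) le_rfl zero_le_one le_rfl
    _ = 2 * Real.exp (2*r) * SS2 * G1 := by
        rw [show (fun t : ℝ => ‖σ₂ t‖ * (Real.exp (2*r)
            * ((1/2) * (gamma01 σ₁ μ t)^2 * SS2 + (3/2) * G1)))
          = fun t : ℝ => (Real.exp (2*r) * (1/2) * SS2) * (‖σ₂ t‖ * (gamma01 σ₁ μ t)^2)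
              + (Real.exp (2*r) * (3/2) * G1) * ‖σ₂ t‖ from
          funext fun t => by ring]
        rw [intervalIntegral.integral_add
          ((II (sig2g01sqInt hi1 hi2) le_rfl zero_le_one le_rfl).const_mul _)
          ((II hi2.norm le_rfl zero_le_one le_rfl).const_mul _),
          intervalIntegral.integral_const_mul, intervalIntegral.integral_const_mul]
        rw [← hSS2def, ← hG1def]
        ring

end K2sq
/-! ### Norm comparisons and Hölder -/

section Norms

variable {σ₁ σ₂ : ℝ → ℂ} {μ : ℂ} {p q : ℝ≥0∞}

lemma probMeasure : IsProbabilityMeasure (volume.restrict (Icc (0:ℝ) 1)) := by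
  constructor
  rw [Measure.restrict_apply_univ, Real.volume_Icc]
  norm_num

lemma memMax (hσ₁m : Measurable σ₁) (hσ₂m : Measurable σ₂)
    (hσ₁ : MemLp σ₁ p (volume.restrict (Icc (0:ℝ) 1)))
    (hσ₂ : MemLp σ₂ p (volume.restrict (Icc (0:ℝ) 1))) :
    MemLp (fun x => max ‖σ₁ x‖ ‖σ₂ x‖) p (volume.restrict (Icc (0:ℝ) 1)) := by
  apply MemLp.of_le (hσ₁.norm.add hσ₂.norm)
    ((hσ₁m.norm.max hσ₂m.norm).aestronglyMeasurable)
  filter_upwards with x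
  simp only [Pi.add_apply]
  have h1 : (0:ℝ) ≤ max ‖σ₁ x‖ ‖σ₂ x‖ := le_trans (norm_nonneg _) (le_max_left _ _)
  rw [Real.norm_of_nonneg h1, Real.norm_of_nonneg (by positivity)]
  rcases max_cases ‖σ₁ x‖ ‖σ₂ x‖ with ⟨h, _⟩ | ⟨h, _⟩ <;> rw [h] <;>
    [linarith [norm_nonneg (σ₂ x)]; linarith [norm_nonneg (σ₁ x)]]

lemma sigmaNorm_nonneg (σ₁ σ₂ : ℝ → ℂ) (p : ℝ≥0∞) : 0 ≤ sigmaNorm σ₁ σ₂ p :=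
  ENNReal.toReal_nonneg

lemma eLpNorm_le_sigmaNorm1 (hσ₁m : Measurable σ₁) (hσ₂m : Measurable σ₂)
    (hσ₁ : MemLp σ₁ p (volume.restrict (Icc (0:ℝ) 1)))
    (hσ₂ : MemLp σ₂ p (volume.restrict (Icc (0:ℝ) 1))) :
    (eLpNorm σ₁ p (volume.restrict (Icc (0:ℝ) 1))).toReal ≤ sigmaNorm σ₁ σ₂ p := by
  apply ENNReal.toReal_mono (memMax hσ₁m hσ₂m hσ₁ hσ₂).2.ne
  apply eLpNorm_mono_real
  intro x
  exact le_max_left _ _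

lemma eLpNorm_le_sigmaNorm2 (hσ₁m : Measurable σ₁) (hσ₂m : Measurable σ₂)
    (hσ₁ : MemLp σ₁ p (volume.restrict (Icc (0:ℝ) 1)))
    (hσ₂ : MemLp σ₂ p (volume.restrict (Icc (0:ℝ) 1))) :
    (eLpNorm σ₂ p (volume.restrict (Icc (0:ℝ) 1))).toReal ≤ sigmaNorm σ₁ σ₂ p := by
  apply ENNReal.toReal_mono (memMax hσ₁m hσ₂m hσ₁ hσ₂).2.ne
  apply eLpNorm_mono_real
  intro x
  exact le_max_right _ _

lemma intervalIntegral_norm_eq_toReal {f : ℝ → ℂ} (hm : Measurable f)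
    (hf : IntegrableOn f (Icc (0:ℝ) 1) volume) :
    (∫ s in (0:ℝ)..1, ‖f s‖) = (eLpNorm f 1 (volume.restrict (Icc (0:ℝ) 1))).toReal := by
  rw [intervalIntegral.integral_of_le zero_le_one,
    ← MeasureTheory.integral_Icc_eq_integral_Ioc,
    MeasureTheory.eLpNorm_one_eq_lintegral_enorm,
    MeasureTheory.integral_norm_eq_lintegral_enorm
      (hm.aestronglyMeasurable (μ := volume.restrict (Icc (0:ℝ) 1)))]

lemma SS_le_sigmaNorm1 (hp1 : 1 ≤ p) (hσ₁m : Measurable σ₁) (hσ₂m : Measurable σ₂)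
    (hσ₁ : MemLp σ₁ p (volume.restrict (Icc (0:ℝ) 1)))
    (hσ₂ : MemLp σ₂ p (volume.restrict (Icc (0:ℝ) 1)))
    (hi1 : IntegrableOn σ₁ (Icc (0:ℝ) 1) volume) :
    (∫ s in (0:ℝ)..1, ‖σ₁ s‖) ≤ sigmaNorm σ₁ σ₂ p := by
  haveI := probMeasure
  rw [intervalIntegral_norm_eq_toReal hσ₁m hi1]
  calc (eLpNorm σ₁ 1 (volume.restrict (Icc (0:ℝ) 1))).toReal
      ≤ (eLpNorm σ₁ p (volume.restrict (Icc (0:ℝ) 1))).toReal := by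
        apply ENNReal.toReal_mono hσ₁.2.ne
        exact MeasureTheory.eLpNorm_le_eLpNorm_of_exponent_le hp1 hσ₁m.aestronglyMeasurable
    _ ≤ sigmaNorm σ₁ σ₂ p := eLpNorm_le_sigmaNorm1 hσ₁m hσ₂m hσ₁ hσ₂

lemma SS_le_sigmaNorm2 (hp1 : 1 ≤ p) (hσ₁m : Measurable σ₁) (hσ₂m : Measurable σ₂)
    (hσ₁ : MemLp σ₁ p (volume.restrict (Icc (0:ℝ) 1)))
    (hσ₂ : MemLp σ₂ p (volume.restrict (Icc (0:ℝ) 1)))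
    (hi2 : IntegrableOn σ₂ (Icc (0:ℝ) 1) volume) :
    (∫ s in (0:ℝ)..1, ‖σ₂ s‖) ≤ sigmaNorm σ₁ σ₂ p := by
  haveI := probMeasure
  rw [intervalIntegral_norm_eq_toReal hσ₂m hi2]
  calc (eLpNorm σ₂ 1 (volume.restrict (Icc (0:ℝ) 1))).toReal
      ≤ (eLpNorm σ₂ p (volume.restrict (Icc (0:ℝ) 1))).toReal := by
        apply ENNReal.toReal_mono hσ₂.2.ne
        exact MeasureTheory.eLpNorm_le_eLpNorm_of_exponent_le hp1 hσ₂m.aestronglyMeasurable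
    _ ≤ sigmaNorm σ₁ σ₂ p := eLpNorm_le_sigmaNorm2 hσ₁m hσ₂m hσ₁ hσ₂

/-- Hölder pairing on `[0,1]` for a measurable `f` and a nonnegative continuous-on `g`. -/
lemma holder_pair {f : ℝ → ℂ} {g : ℝ → ℝ} (hpq : 1/p + 1/q = 1)
    (hfm : Measurable f) (hf : MemLp f p (volume.restrict (Icc (0:ℝ) 1)))
    (hgc : ContinuousOn g (Icc (0:ℝ) 1)) (hg0 : ∀ x, 0 ≤ g x)
    (hint : IntegrableOn (fun u : ℝ => ‖f u‖ * g u) (Icc (0:ℝ) 1) volume) :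
    (∫ u in (0:ℝ)..1, ‖f u‖ * g u)
      ≤ (eLpNorm f p (volume.restrict (Icc (0:ℝ) 1))).toReal
        * (eLpNorm g q (volume.restrict (Icc (0:ℝ) 1))).toReal := by
  haveI := probMeasure
  set res := volume.restrict (Icc (0:ℝ) 1) with hres
  have hgm : AEStronglyMeasurable g res := hgc.aestronglyMeasurable measurableSet_Icc
  obtain ⟨B, hB⟩ := isCompact_Icc.exists_bound_of_continuousOn hgc
  have hgmem : MemLp g q res := by
    apply MemLp.of_bound hgm B
    filter_upwards [MeasureTheory.ae_restrict_mem measurableSet_Icc] with x hx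
    exact hB x hx
  have key : eLpNorm (fun x => ‖f x‖ * g x) 1 res
      ≤ eLpNorm f p res * eLpNorm g q res := by
    have hH : ENNReal.HolderTriple p q 1 := ⟨by simpa [one_div] using hpq⟩
    have := MeasureTheory.eLpNorm_le_eLpNorm_mul_eLpNorm'_of_norm (p := p) (q := q) (r := 1)
      hfm.aestronglyMeasurable hgm (fun a b' => ‖a‖ * b') 1 (by
        filter_upwards with x
        rw [Real.norm_eq_abs, abs_mul, abs_of_nonneg (norm_nonneg _), Real.norm_eq_abs]
        simp)
    simpa using this
  have hL : (∫ u in (0:ℝ)..1, ‖f u‖ * g u)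
      = (eLpNorm (fun x => ‖f x‖ * g x) 1 res).toReal := by
    rw [intervalIntegral.integral_of_le zero_le_one,
      ← MeasureTheory.integral_Icc_eq_integral_Ioc,
      MeasureTheory.eLpNorm_one_eq_lintegral_enorm]
    rw [show (∫ u in Icc (0:ℝ) 1, ‖f u‖ * g u)
        = ∫ u in Icc (0:ℝ) 1, ‖‖f u‖ * g u‖ from by
      apply MeasureTheory.integral_congr_ae
      filter_upwards with u
      rw [Real.norm_of_nonneg (mul_nonneg (norm_nonneg _) (hg0 u))]]
    rw [MeasureTheory.integral_norm_eq_lintegral_enorm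
      (f := fun x : ℝ => ‖f x‖ * g x) (μ := res)
      (by exact hfm.norm.aestronglyMeasurable.mul hgm)]
  rw [hL, ← ENNReal.toReal_mul]
  exact ENNReal.toReal_mono (ENNReal.mul_ne_top hf.2.ne hgmem.2.ne) key

end Norms
lemma assembly (K : (ℝ → ℂ) → ℝ → ℂ) (b κ : ℝ) (hb : 0 ≤ b) (hκ : 0 ≤ κ)
    (Hcont : ∀ z, ContinuousOn z (Icc 0 1) → ContinuousOn (K z) (Icc 0 1))
    (Hbound : ∀ z C, ContinuousOn z (Icc 0 1) → (∀ s ∈ Icc (0:ℝ) 1, ‖z s‖ ≤ C) →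
        ∀ x ∈ Icc (0:ℝ) 1, ‖K z x‖ ≤ b * C)
    (Hhalf : ∀ z C, ContinuousOn z (Icc 0 1) → (∀ s ∈ Icc (0:ℝ) 1, ‖z s‖ ≤ C) →
        ∀ x ∈ Icc (0:ℝ) 1, ‖K (K z) x‖ ≤ (1/2) * C)
    (Hsq : ∀ x ∈ Icc (0:ℝ) 1, ‖K (K eFun) x‖ ≤ κ)
    (Hadd : ∀ z w (c : ℂ), ContinuousOn z (Icc 0 1) → ContinuousOn w (Icc 0 1) →
        ∀ x ∈ Icc (0:ℝ) 1, K (fun y => z y + c * w y) x = K z x + c * K w x)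
    (Hsmul : ∀ w (c : ℂ), ContinuousOn w (Icc 0 1) →
        ∀ x ∈ Icc (0:ℝ) 1, K (fun y => c * w y) x = c * K w x)
    (Hcongr : ∀ z w : ℝ → ℂ, (∀ y ∈ Icc (0:ℝ) 1, z y = w y) →
        ∀ x ∈ Icc (0:ℝ) 1, K z x = K w x) :
    (Summable fun n : ℕ => ⨆ x : Icc (0:ℝ) 1, ‖(K^[n] eFun) x‖)
    ∧ ContinuousOn (fun x => ∑' n : ℕ, (-1:ℂ)^n * (K^[n] eFun) x) (Icc 0 1)
    ∧ (∀ x ∈ Icc (0:ℝ) 1,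
        (∑' n : ℕ, (-1:ℂ)^n * (K^[n] eFun) x)
          + K (fun y => ∑' n : ℕ, (-1:ℂ)^n * (K^[n] eFun) y) x = 1)
    ∧ (∀ w : ℝ → ℂ, ContinuousOn w (Icc (0:ℝ) 1) →
        (∀ x ∈ Icc (0:ℝ) 1, w x + K w x = 1) →
        ∀ x ∈ Icc (0:ℝ) 1, w x = ∑' n : ℕ, (-1:ℂ)^n * (K^[n] eFun) x)
    ∧ (∀ x ∈ Icc (0:ℝ) 1,
        ‖(∑' n : ℕ, (-1:ℂ)^n * (K^[n] eFun) x) - 1 + K eFun x‖ ≤ 6 * max 1 b * κ) := by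
  haveI : Nonempty (Icc (0:ℝ) 1) := ⟨⟨0, by norm_num⟩⟩
  set s2 : ℝ := Real.sqrt 2 with hs2def
  have hs2 : s2 * s2 = 2 := Real.mul_self_sqrt (by norm_num)
  have hs2pos : 0 < s2 := Real.sqrt_pos.2 (by norm_num)
  have hs2ge : 1.4 ≤ s2 := by nlinarith
  have hs2le : s2 ≤ 1.5 := by nlinarith
  set q : ℝ := s2⁻¹ with hqdef
  have hq0 : 0 < q := inv_pos.2 hs2pos
  have hq1 : q < 1 := by
    rw [hqdef, inv_lt_one_iff₀]; right; linarith
  have hqs : q * s2 = 1 := inv_mul_cancel₀ hs2pos.ne'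
  have hqq : q * q = 1/2 := by nlinarith
  set D : ℝ := max 1 b with hDdef
  have hD1 : 1 ≤ D := le_max_left _ _
  have hDb : b ≤ D := le_max_right _ _
  have hD0 : 0 ≤ D := le_trans zero_le_one hD1
  set C : ℕ → ℝ := fun n => D * s2 * q ^ n with hCdef
  have hC0 : ∀ n, 0 ≤ C n := fun n => by positivity
  have hC2 : ∀ n, C (n + 2) = (1/2) * C n := by
    intro n
    have hqn : q ^ (n+2) = q ^ n * (q * q) := by ring
    simp only [hCdef]
    rw [hqn, hqq]; ring
  have hiter : ∀ n, ContinuousOn (K^[n] eFun) (Icc (0:ℝ) 1) := by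
    intro n; induction n with
    | zero => exact continuous_const.continuousOn
    | succ n ih => rw [Function.iterate_succ_apply']; exact Hcont _ ih
  have hbnd : ∀ n, ∀ x ∈ Icc (0:ℝ) 1, ‖(K^[n] eFun) x‖ ≤ C n := by
    intro n
    induction n using Nat.twoStepInduction with
    | zero =>
      intro x _
      simp only [Function.iterate_zero, id_eq, eFun, norm_one, hCdef, pow_zero, mul_one]
      nlinarith
    | one =>
      intro x hx
      rw [Function.iterate_one]
      have h := Hbound eFun 1 continuous_const.continuousOn
        (fun s _ => by simp [eFun]) x hx
      have hC1 : C 1 = D := by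
        simp only [hCdef, pow_one]
        rw [mul_assoc, mul_comm s2 q, hqs, mul_one]
      rw [hC1]
      linarith
    | more n ih _ =>
      intro x hx
      have heq : K^[n + 2] eFun = K (K (K^[n] eFun)) := by
        rw [Function.iterate_succ_apply', Function.iterate_succ_apply']
      rw [heq, hC2 n]
      exact Hhalf _ (C n) (hiter n) (fun s hs => ih s hs) x hx
  have hCsum : Summable C :=
    (summable_geometric_of_lt_one hq0.le hq1).mul_left _
  have hnorm : ∀ (n : ℕ) (x : ℝ), ‖(-1:ℂ)^n * (K^[n] eFun) x‖ = ‖(K^[n] eFun) x‖ := by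
    intro n x
    rw [norm_mul, norm_pow, norm_neg, norm_one, one_pow, one_mul]
  have hsummable : ∀ x ∈ Icc (0:ℝ) 1, Summable (fun n => (-1:ℂ)^n * (K^[n] eFun) x) := by
    intro x hx
    apply Summable.of_norm_bounded hCsum
    intro n; rw [hnorm]; exact hbnd n x hx
  set Z : ℝ → ℂ := fun x => ∑' n : ℕ, (-1:ℂ)^n * (K^[n] eFun) x with hZdef
  have hZcont : ContinuousOn Z (Icc (0:ℝ) 1) := by
    apply continuousOn_tsum (u := C)
    · intro n; exact continuousOn_const.mul (hiter n)
    · exact hCsum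
    · intro n x hx; rw [hnorm]; exact hbnd n x hx
  set S : ℕ → ℝ → ℂ := fun N y => ∑ n ∈ Finset.range N, (-1:ℂ)^n * (K^[n] eFun) y with hSdef
  have hScont : ∀ N, ContinuousOn (S N) (Icc (0:ℝ) 1) := by
    intro N
    apply continuousOn_finset_sum
    intro n _; exact continuousOn_const.mul (hiter n)
  have hKS : ∀ N, ∀ x ∈ Icc (0:ℝ) 1,
      K (S N) x = ∑ n ∈ Finset.range N, (-1:ℂ)^n * (K^[n+1] eFun) x := by
    intro N
    induction N with
    | zero =>
      intro x hx
      rw [Hcongr (S 0) (fun y => (0:ℂ) * eFun y) (fun y _ => by simp [hSdef]) x hx]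
      rw [Hsmul eFun 0 continuous_const.continuousOn x hx]
      simp
    | succ N ih =>
      intro x hx
      have h1 : ∀ y ∈ Icc (0:ℝ) 1, S (N+1) y = S N y + ((-1:ℂ)^N) * (K^[N] eFun) y := by
        intro y _; simp [hSdef, Finset.sum_range_succ]
      rw [Hcongr _ _ h1 x hx, Hadd (S N) (K^[N] eFun) ((-1:ℂ)^N) (hScont N) (hiter N) x hx,
        ih x hx, Finset.sum_range_succ, Function.iterate_succ_apply']
  have hSid : ∀ N, ∀ x ∈ Icc (0:ℝ) 1,
      S N x + K (S N) x = 1 - (-1:ℂ)^N * (K^[N] eFun) x := by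
    intro N x hx
    rw [hKS N x hx]
    have hneg : ∀ n ∈ Finset.range N, (-1:ℂ)^n * (K^[n+1] eFun) x
        = -((-1:ℂ)^(n+1) * (K^[n+1] eFun) x) := by
      intro n _; rw [pow_succ]; ring
    rw [Finset.sum_congr rfl hneg]
    simp only [hSdef]
    rw [← Finset.sum_add_distrib]
    have htel := Finset.sum_range_sub' (f := fun n => (-1:ℂ)^n * (K^[n] eFun) x) N
    have : ∀ n ∈ Finset.range N, (-1:ℂ)^n * (K^[n] eFun) x + -((-1:ℂ)^(n+1) * (K^[n+1] eFun) x)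
        = (fun n => (-1:ℂ)^n * (K^[n] eFun) x) n - (fun n => (-1:ℂ)^n * (K^[n] eFun) x) (n+1) := by
      intro n _; ring
    rw [Finset.sum_congr rfl this, htel]
    simp [eFun]
  have hEq : ∀ x ∈ Icc (0:ℝ) 1, Z x + K Z x = 1 := by
    intro x hx
    have h1 : Filter.Tendsto (fun N => S N x) Filter.atTop (nhds (Z x)) :=
      (hsummable x hx).hasSum.tendsto_sum_nat
    have hgeo : Filter.Tendsto (fun N : ℕ => C N) Filter.atTop (nhds 0) := by
      have := (tendsto_pow_atTop_nhds_zero_of_lt_one hq0.le hq1).const_mul (D * s2)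
      simpa [hCdef] using this
    have h2 : Filter.Tendsto (fun N => (-1:ℂ)^N * (K^[N] eFun) x) Filter.atTop (nhds 0) := by
      apply squeeze_zero_norm (fun N => ?_) hgeo
      rw [hnorm]; exact hbnd N x hx
    have htail : ∀ N, ∀ y ∈ Icc (0:ℝ) 1, ‖Z y - S N y‖ ≤ (D * s2 * (1-q)⁻¹) * q ^ N := by
      intro N y hy
      have hsum := hsummable y hy
      have hshift := Summable.sum_add_tsum_nat_add (f := fun n => (-1:ℂ)^n * (K^[n] eFun) y) N hsum
      have hZS : Z y - S N y = ∑' i : ℕ, (-1:ℂ)^(i+N) * (K^[i+N] eFun) y := by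
        rw [hZdef]
        simp only
        rw [← hshift]
        simp [hSdef]
      rw [hZS]
      have hsumN : Summable (fun i => C (i + N)) := by
        rw [summable_nat_add_iff]; exact hCsum
      have hnb : ∀ i, ‖(-1:ℂ)^(i+N) * (K^[i+N] eFun) y‖ ≤ C (i+N) := by
        intro i; rw [hnorm]; exact hbnd _ y hy
      have hsn : Summable (fun i => ‖(-1:ℂ)^(i+N) * (K^[i+N] eFun) y‖) :=
        Summable.of_nonneg_of_le (fun i => norm_nonneg _) hnb hsumN
      have hCshift : ∑' i : ℕ, C (i + N) = (D * s2 * (1-q)⁻¹) * q ^ N := by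
        have hc : ∀ i, C (i + N) = (D * s2 * q ^ N) * q ^ i := by
          intro i; simp only [hCdef, pow_add]; ring
        rw [tsum_congr hc, tsum_mul_left, tsum_geometric_of_lt_one hq0.le hq1]; ring
      calc ‖∑' i : ℕ, (-1:ℂ)^(i+N) * (K^[i+N] eFun) y‖
          ≤ ∑' i : ℕ, ‖(-1:ℂ)^(i+N) * (K^[i+N] eFun) y‖ := norm_tsum_le_tsum_norm hsn
        _ ≤ ∑' i : ℕ, C (i + N) := Summable.tsum_le_tsum hnb hsn hsumN
        _ = (D * s2 * (1-q)⁻¹) * q ^ N := hCshift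
    have h3 : Filter.Tendsto (fun N => K (S N) x) Filter.atTop (nhds (K Z x)) := by
      have hdiff : ∀ N, ‖K (S N) x - K Z x‖ ≤ (b * (D * s2 * (1-q)⁻¹)) * q ^ N := by
        intro N
        have hKZ : K Z x = K (S N) x + (1:ℂ) * K (fun y => Z y - S N y) x := by
          rw [Hcongr Z (fun y => S N y + (1:ℂ) * (Z y - S N y)) (fun y _ => by ring) x hx]
          exact Hadd (S N) (fun y => Z y - S N y) 1 (hScont N) (hZcont.sub (hScont N)) x hx
        have hKb := Hbound (fun y => Z y - S N y) ((D * s2 * (1-q)⁻¹) * q ^ N)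
          (hZcont.sub (hScont N)) (fun y hy => htail N y hy) x hx
        rw [hKZ]
        have hh : ‖K (S N) x - (K (S N) x + (1:ℂ) * K (fun y => Z y - S N y) x)‖
            = ‖K (fun y => Z y - S N y) x‖ := by
          rw [show K (S N) x - (K (S N) x + (1:ℂ) * K (fun y => Z y - S N y) x)
            = -(K (fun y => Z y - S N y) x) from by ring, norm_neg]
        rw [hh]
        calc ‖K (fun y => Z y - S N y) x‖
            ≤ b * ((D * s2 * (1-q)⁻¹) * q ^ N) := hKb
          _ = (b * (D * s2 * (1-q)⁻¹)) * q ^ N := by ring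
      have hz : Filter.Tendsto (fun N => K (S N) x - K Z x) Filter.atTop (nhds 0) := by
        apply squeeze_zero_norm hdiff
        simpa using (tendsto_pow_atTop_nhds_zero_of_lt_one hq0.le hq1).const_mul
          (b * (D * s2 * (1-q)⁻¹))
      have := hz.add_const (K Z x)
      simpa using this
    have hid : Filter.Tendsto (fun N => S N x + K (S N) x) Filter.atTop
        (nhds (Z x + K Z x)) := h1.add h3
    have hid2 : Filter.Tendsto (fun N => S N x + K (S N) x) Filter.atTop (nhds 1) := by
      have heq2 : (fun N => S N x + K (S N) x)
          = fun N => 1 - (-1:ℂ)^N * (K^[N] eFun) x := by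
        funext N; exact hSid N x hx
      rw [heq2]
      simpa using (h2.const_sub 1)
    exact tendsto_nhds_unique hid hid2
  have hUniq : ∀ w : ℝ → ℂ, ContinuousOn w (Icc (0:ℝ) 1) →
      (∀ x ∈ Icc (0:ℝ) 1, w x + K w x = 1) →
      ∀ x ∈ Icc (0:ℝ) 1, w x = Z x := by
    intro w hwcont hw
    set v : ℝ → ℂ := fun y => w y - Z y with hvdef
    have hvcont : ContinuousOn v (Icc (0:ℝ) 1) := hwcont.sub hZcont
    have hvK : ∀ x ∈ Icc (0:ℝ) 1, v x = -(K v x) := by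
      intro x hx
      have hKw : K w x = K Z x + (1:ℂ) * K v x := by
        rw [Hcongr w (fun y => Z y + (1:ℂ) * v y) (fun y _ => by simp only [hvdef]; ring) x hx]
        exact Hadd Z v 1 hZcont hvcont x hx
      have e1 := hw x hx
      have e2 := hEq x hx
      rw [hKw] at e1
      simp only [hvdef] at e1 ⊢
      linear_combination e1 - e2
    have hvKK : ∀ x ∈ Icc (0:ℝ) 1, v x = K (K v) x := by
      intro x hx
      have hKvcont : ContinuousOn (K v) (Icc (0:ℝ) 1) := Hcont v hvcont
      have hcg : K v x = K (fun y => (-1:ℂ) * K v y) x :=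
        Hcongr v (fun y => (-1:ℂ) * K v y) (fun y hy => by rw [hvK y hy]; ring) x hx
      rw [hvK x hx, hcg, Hsmul (K v) (-1) hKvcont x hx]
      ring
    obtain ⟨B, hB⟩ := isCompact_Icc.exists_bound_of_continuousOn hvcont
    have hbdd : BddAbove (Set.range fun y : Icc (0:ℝ) 1 => ‖v y‖) := by
      refine ⟨B, ?_⟩
      rintro _ ⟨y, rfl⟩
      exact hB y y.2
    set Cv : ℝ := ⨆ y : Icc (0:ℝ) 1, ‖v y‖ with hCvdef
    have hle : ∀ y ∈ Icc (0:ℝ) 1, ‖v y‖ ≤ Cv := fun y hy => le_ciSup hbdd ⟨y, hy⟩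
    have hhalfCv : Cv ≤ (1/2) * Cv := by
      apply ciSup_le
      intro y
      rw [hvKK y y.2]
      exact Hhalf v Cv hvcont hle y y.2
    have hCv0 : Cv ≤ 0 := by linarith
    intro x hx
    have hv0 : v x = 0 := norm_le_zero_iff.1 ((hle x hx).trans hCv0)
    have := sub_eq_zero.1 hv0
    exact this
  -- asymptotics
  have hAsym : ∀ x ∈ Icc (0:ℝ) 1, ‖Z x - 1 + K eFun x‖ ≤ 6 * D * κ := by
    intro x hx
    set E : ℕ → ℝ := fun i => D * κ * s2 * q ^ i with hEdef
    have hE2 : ∀ i, E (i + 2) = (1/2) * E i := by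
      intro i
      have hqn : q ^ (i+2) = q ^ i * (q * q) := by ring
      simp only [hEdef]
      rw [hqn, hqq]; ring
    have hEbnd : ∀ i, ∀ y ∈ Icc (0:ℝ) 1, ‖(K^[i+2] eFun) y‖ ≤ E i := by
      intro i
      induction i using Nat.twoStepInduction with
      | zero =>
        intro y hy
        have h0 : K^[0+2] eFun = K (K eFun) := by
          rw [show (0+2) = 2 from rfl]
          rw [show K^[2] eFun = K (K^[1] eFun) from Function.iterate_succ_apply' K 1 eFun,
            Function.iterate_one]
        rw [h0]
        calc ‖K (K eFun) y‖ ≤ κ := Hsq y hy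
          _ ≤ E 0 := by
            simp only [hEdef, pow_zero, mul_one]
            have hk1 : κ ≤ D * κ := by nlinarith [mul_nonneg hκ (sub_nonneg.2 hD1)]
            have hk2 : D * κ ≤ D * κ * s2 := by
              nlinarith [mul_nonneg (mul_nonneg hD0 hκ) (by linarith : (0:ℝ) ≤ s2 - 1)]
            linarith
      | one =>
        intro y hy
        have h0 : K^[1+2] eFun = K (K^[0+2] eFun) := Function.iterate_succ_apply' K 2 eFun
        rw [h0]
        have hKKe : ContinuousOn (K^[0+2] eFun) (Icc (0:ℝ) 1) := hiter 2
        have hKKb : ∀ s ∈ Icc (0:ℝ) 1, ‖(K^[0+2] eFun) s‖ ≤ κ := by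
          intro s hs
          have h0' : K^[0+2] eFun = K (K eFun) := by
            rw [show K^[2] eFun = K (K^[1] eFun) from Function.iterate_succ_apply' K 1 eFun,
              Function.iterate_one]
          rw [h0']
          exact Hsq s hs
        have := Hbound (K^[0+2] eFun) κ hKKe hKKb y hy
        calc ‖K (K^[0+2] eFun) y‖ ≤ b * κ := this
          _ ≤ E 1 := by
            have hE1 : E 1 = D * κ := by
              simp only [hEdef, pow_one]
              rw [mul_assoc (D * κ) s2 q, mul_comm s2 q, hqs, mul_one]
            rw [hE1]
            exact mul_le_mul_of_nonneg_right hDb hκ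
      | more i ih _ =>
        intro y hy
        have h0 : K^[(i+2)+2] eFun = K (K (K^[i+2] eFun)) := by
          rw [show (i+2)+2 = ((i+2)+1)+1 from rfl, Function.iterate_succ_apply',
            Function.iterate_succ_apply']
        rw [h0, hE2 i]
        exact Hhalf (K^[i+2] eFun) (E i) (hiter (i+2)) (fun s hs => ih s hs) y hy
    have hEsum : Summable E := (summable_geometric_of_lt_one hq0.le hq1).mul_left _
    have hsum := hsummable x hx
    have hshift := Summable.sum_add_tsum_nat_add (f := fun n => (-1:ℂ)^n * (K^[n] eFun) x) 2 hsum
    have h2sum : ∑ n ∈ Finset.range 2, (-1:ℂ)^n * (K^[n] eFun) x = 1 - K eFun x := by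
      rw [Finset.sum_range_succ, Finset.sum_range_one]
      simp [eFun, sub_eq_add_neg]
    have hZx : Z x - 1 + K eFun x = ∑' i : ℕ, (-1:ℂ)^(i+2) * (K^[i+2] eFun) x := by
      rw [hZdef]
      simp only
      rw [← hshift, h2sum]
      ring
    rw [hZx]
    have hnb : ∀ i, ‖(-1:ℂ)^(i+2) * (K^[i+2] eFun) x‖ ≤ E i := by
      intro i; rw [hnorm]; exact hEbnd i x hx
    have hsn : Summable (fun i => ‖(-1:ℂ)^(i+2) * (K^[i+2] eFun) x‖) :=
      Summable.of_nonneg_of_le (fun i => norm_nonneg _) hnb hEsum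
    have hEtsum : ∑' i : ℕ, E i = D * κ * s2 * (1-q)⁻¹ := by
      simp only [hEdef]
      rw [tsum_mul_left, tsum_geometric_of_lt_one hq0.le hq1]
    have hfinal : D * κ * s2 * (1-q)⁻¹ ≤ 6 * D * κ := by
      have hq1' : 0 < 1 - q := by linarith
      have hiq : (1-q) * (1-q)⁻¹ = 1 := mul_inv_cancel₀ hq1'.ne'
      have hsq1 : (s2 - 1) * (1-q)⁻¹ = s2 := by
        have : s2 * ((1-q) * (1-q)⁻¹) = s2 := by rw [hiq]; ring
        calc (s2 - 1) * (1-q)⁻¹ = (s2 * (1-q)) * (1-q)⁻¹ := by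
              rw [show s2 * (1-q) = s2 - s2 * q from by ring, mul_comm s2 q, hqs]
          _ = s2 := by rw [mul_assoc, hiq, mul_one]
      have hinv0 : 0 ≤ (1-q)⁻¹ := inv_nonneg.2 hq1'.le
      have hs2i : s2 * (1-q)⁻¹ ≤ 6 := by nlinarith
      calc D * κ * s2 * (1-q)⁻¹ = (D * κ) * (s2 * (1-q)⁻¹) := by ring
        _ ≤ (D * κ) * 6 := by
            apply mul_le_mul_of_nonneg_left hs2i (mul_nonneg hD0 hκ)
        _ = 6 * D * κ := by ring
    calc ‖∑' i : ℕ, (-1:ℂ)^(i+2) * (K^[i+2] eFun) x‖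
        ≤ ∑' i : ℕ, ‖(-1:ℂ)^(i+2) * (K^[i+2] eFun) x‖ := norm_tsum_le_tsum_norm hsn
      _ ≤ ∑' i : ℕ, E i := Summable.tsum_le_tsum hnb hsn hEsum
      _ = D * κ * s2 * (1-q)⁻¹ := hEtsum
      _ ≤ 6 * D * κ := hfinal
  refine ⟨?_, hZcont, hEq, hUniq, hAsym⟩
  have h1 : ∀ n : ℕ, 0 ≤ ⨆ x : Icc (0:ℝ) 1, ‖(K^[n] eFun) x‖ :=
    fun n => Real.iSup_nonneg (fun x => norm_nonneg _)
  have h2 : ∀ n : ℕ, (⨆ x : Icc (0:ℝ) 1, ‖(K^[n] eFun) x‖) ≤ C n :=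
    fun n => ciSup_le (fun x => hbnd n x x.2)
  exact Summable.of_nonneg_of_le h1 h2 hCsum

end Stmt6Aux

/-- A solution of the Dirac system `y₁' + σ₁ y₂ = iμ y₁`, `y₂' + σ₂ y₁ = −iμ y₂` on `[0,1]`,
with `y₁, y₂` absolutely continuous (i.e. in `W^{1,1}[0,1]`, so each is the indefinite
integral of an integrable function, and the equations hold a.e. with those derivatives). -/
def IsDiracSolution (σ₁ σ₂ : ℝ → ℂ) (μ : ℂ) (y₁ y₂ : ℝ → ℂ) : Prop :=
  ∃ g₁ g₂ : ℝ → ℂ,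
    IntervalIntegrable g₁ volume 0 1 ∧ IntervalIntegrable g₂ volume 0 1 ∧
    (∀ x ∈ Icc (0:ℝ) 1, y₁ x = y₁ 0 + ∫ t in (0:ℝ)..x, g₁ t) ∧
    (∀ x ∈ Icc (0:ℝ) 1, y₂ x = y₂ 0 + ∫ t in (0:ℝ)..x, g₂ t) ∧
    (∀ᵐ x ∂(volume.restrict (Icc (0:ℝ) 1)),
      g₁ x + σ₁ x * y₂ x = Complex.I * μ * y₁ x) ∧
    (∀ᵐ x ∂(volume.restrict (Icc (0:ℝ) 1)),
      g₂ x + σ₂ x * y₁ x = -(Complex.I * μ) * y₂ x)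

/-- the Neumann series solution of `z + K_j z = 1` and its first-order asymptotics. -/
theorem stmt6
    (p q : ℝ≥0∞) (hp1 : 1 ≤ p) (hp2 : p < 2) (hpq : 1/p + 1/q = 1)
    (σ₁ σ₂ : ℝ → ℂ) (hσ₁m : Measurable σ₁) (hσ₂m : Measurable σ₂)
    (hσ₁ : MemLp σ₁ p (volume.restrict (Icc (0:ℝ) 1)))
    (hσ₂ : MemLp σ₂ p (volume.restrict (Icc (0:ℝ) 1)))
    (r : ℝ) (hr : 0 ≤ r) :
    ∃ c > 0, ∀ μ : ℂ, -r < μ.im →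
      gamma1 σ₁ q μ ≤ 1 / (2 * (2 * Real.exp (4*r) * (sigmaNorm σ₁ σ₂ p)^3)) →
      gamma2 σ₂ q μ ≤ 1 / (2 * (2 * Real.exp (4*r) * (sigmaNorm σ₁ σ₂ p)^3)) →
      -- the series converges absolutely in the supremum norm
      (Summable (fun n : ℕ => ⨆ x : Icc (0:ℝ) 1, ‖((K1 σ₁ σ₂ μ)^[n] eFun) x‖))
      ∧ (Summable (fun n : ℕ => ⨆ x : Icc (0:ℝ) 1, ‖((K2 σ₁ σ₂ μ)^[n] eFun) x‖))
      -- the sum z₁ is continuous and solves z + K₁ z = 1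
      ∧ ContinuousOn (fun x => ∑' n : ℕ, (-1:ℂ)^n * ((K1 σ₁ σ₂ μ)^[n] eFun) x) (Icc (0:ℝ) 1)
      ∧ (∀ x ∈ Icc (0:ℝ) 1,
          (∑' n : ℕ, (-1:ℂ)^n * ((K1 σ₁ σ₂ μ)^[n] eFun) x)
            + K1 σ₁ σ₂ μ (fun y => ∑' n : ℕ, (-1:ℂ)^n * ((K1 σ₁ σ₂ μ)^[n] eFun) y) x = 1)
      -- z₁ is the unique continuous solution
      ∧ (∀ w : ℝ → ℂ, ContinuousOn w (Icc (0:ℝ) 1) →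
          (∀ x ∈ Icc (0:ℝ) 1, w x + K1 σ₁ σ₂ μ w x = 1) →
          ∀ x ∈ Icc (0:ℝ) 1, w x = ∑' n : ℕ, (-1:ℂ)^n * ((K1 σ₁ σ₂ μ)^[n] eFun) x)
      -- asymptotics of z₁
      ∧ (∀ x ∈ Icc (0:ℝ) 1,
          ‖(∑' n : ℕ, (-1:ℂ)^n * ((K1 σ₁ σ₂ μ)^[n] eFun) x) - 1 + K1 σ₁ σ₂ μ eFun x‖
            ≤ c * gammaT σ₁ σ₂ μ)
      -- the sum z₂ is continuous and solves z + K₂ z = 1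
      ∧ ContinuousOn (fun x => ∑' n : ℕ, (-1:ℂ)^n * ((K2 σ₁ σ₂ μ)^[n] eFun) x) (Icc (0:ℝ) 1)
      ∧ (∀ x ∈ Icc (0:ℝ) 1,
          (∑' n : ℕ, (-1:ℂ)^n * ((K2 σ₁ σ₂ μ)^[n] eFun) x)
            + K2 σ₁ σ₂ μ (fun y => ∑' n : ℕ, (-1:ℂ)^n * ((K2 σ₁ σ₂ μ)^[n] eFun) y) x = 1)
      -- z₂ is the unique continuous solution
      ∧ (∀ w : ℝ → ℂ, ContinuousOn w (Icc (0:ℝ) 1) →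
          (∀ x ∈ Icc (0:ℝ) 1, w x + K2 σ₁ σ₂ μ w x = 1) →
          ∀ x ∈ Icc (0:ℝ) 1, w x = ∑' n : ℕ, (-1:ℂ)^n * ((K2 σ₁ σ₂ μ)^[n] eFun) x)
      -- asymptotics of z₂
      ∧ (∀ x ∈ Icc (0:ℝ) 1,
          ‖(∑' n : ℕ, (-1:ℂ)^n * ((K2 σ₁ σ₂ μ)^[n] eFun) x) - 1 + K2 σ₁ σ₂ μ eFun x‖
            ≤ c * gammaT σ₁ σ₂ μ) := by
  haveI hprob : IsProbabilityMeasure (volume.restrict (Icc (0:ℝ) 1)) := Stmt6Aux.probMeasure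
  have hi1 : IntegrableOn σ₁ (Icc (0:ℝ) 1) volume := hσ₁.integrable hp1
  have hi2 : IntegrableOn σ₂ (Icc (0:ℝ) 1) volume := hσ₂.integrable hp1
  set SS1 : ℝ := ∫ s in (0:ℝ)..1, ‖σ₁ s‖ with hSS1def
  set SS2 : ℝ := ∫ s in (0:ℝ)..1, ‖σ₂ s‖ with hSS2def
  have hSS1nn : 0 ≤ SS1 :=
    intervalIntegral.integral_nonneg zero_le_one (fun s _ => norm_nonneg _)
  have hSS2nn : 0 ≤ SS2 :=
    intervalIntegral.integral_nonneg zero_le_one (fun s _ => norm_nonneg _)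
  set b : ℝ := Real.exp (2*r) * SS1 * SS2 with hbdef
  have hb0 : 0 ≤ b := by positivity
  set P : ℝ := sigmaNorm σ₁ σ₂ p with hPdef
  have hP0 : 0 ≤ P := ENNReal.toReal_nonneg
  have hmax0 : (0:ℝ) ≤ max 1 b := le_trans zero_le_one (le_max_left _ _)
  set cc : ℝ := 6 * max 1 b * (2 * Real.exp (2*r) * (SS1 + SS2)) + 1 with hccdef
  have hcc : 0 < cc := by
    have h1 : (0:ℝ) ≤ 6 * max 1 b * (2 * Real.exp (2*r) * (SS1 + SS2)) :=
      mul_nonneg (mul_nonneg (by norm_num) hmax0) (by positivity)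
    rw [hccdef]; linarith
  refine ⟨cc, hcc, ?_⟩
  intro μ hμ hg1 hg2
  have hSS1P : SS1 ≤ P := Stmt6Aux.SS_le_sigmaNorm1 hp1 hσ₁m hσ₂m hσ₁ hσ₂ hi1
  have hSS2P : SS2 ≤ P := Stmt6Aux.SS_le_sigmaNorm2 hp1 hσ₁m hσ₂m hσ₁ hσ₂ hi2
  have hNp1P : (eLpNorm σ₁ p (volume.restrict (Icc (0:ℝ) 1))).toReal ≤ P :=
    Stmt6Aux.eLpNorm_le_sigmaNorm1 hσ₁m hσ₂m hσ₁ hσ₂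
  have hNp2P : (eLpNorm σ₂ p (volume.restrict (Icc (0:ℝ) 1))).toReal ≤ P :=
    Stmt6Aux.eLpNorm_le_sigmaNorm2 hσ₁m hσ₂m hσ₁ hσ₂
  have hγ1 : 0 ≤ gamma1 σ₁ q μ := ENNReal.toReal_nonneg
  have hγ2 : 0 ≤ gamma2 σ₂ q μ := ENNReal.toReal_nonneg
  set Hol1 : ℝ := ∫ u in (0:ℝ)..1, ‖σ₁ u‖ * gamma02 σ₂ μ u with hHol1def
  set Hol2 : ℝ := ∫ u in (0:ℝ)..1, ‖σ₂ u‖ * gamma01 σ₁ μ u with hHol2def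
  have hHol1nn : 0 ≤ Hol1 := intervalIntegral.integral_nonneg zero_le_one
    (fun s _ => mul_nonneg (norm_nonneg _) (Stmt6Aux.g02_nn σ₂ μ s))
  have hHol2nn : 0 ≤ Hol2 := intervalIntegral.integral_nonneg zero_le_one
    (fun s _ => mul_nonneg (norm_nonneg _) (Stmt6Aux.g01_nn σ₁ μ s))
  have hHolder1 : Hol1 ≤ P * gamma2 σ₂ q μ := by
    have h := Stmt6Aux.holder_pair hpq hσ₁m hσ₁ (Stmt6Aux.g02_cont hi2)
      (Stmt6Aux.g02_nn σ₂ μ) (Stmt6Aux.sig1g02Int hi1 hi2)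
    calc Hol1 ≤ (eLpNorm σ₁ p (volume.restrict (Icc (0:ℝ) 1))).toReal
        * (eLpNorm (gamma02 σ₂ μ) q (volume.restrict (Icc (0:ℝ) 1))).toReal := h
      _ ≤ P * gamma2 σ₂ q μ := by
          apply mul_le_mul_of_nonneg_right hNp1P
          exact ENNReal.toReal_nonneg
  have hHolder2 : Hol2 ≤ P * gamma1 σ₁ q μ := by
    have h := Stmt6Aux.holder_pair hpq hσ₂m hσ₂ (Stmt6Aux.g01_cont hi1)
      (Stmt6Aux.g01_nn σ₁ μ) (Stmt6Aux.sig2g01Int hi1 hi2)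
    calc Hol2 ≤ (eLpNorm σ₂ p (volume.restrict (Icc (0:ℝ) 1))).toReal
        * (eLpNorm (gamma01 σ₁ μ) q (volume.restrict (Icc (0:ℝ) 1))).toReal := h
      _ ≤ P * gamma1 σ₁ q μ := by
          apply mul_le_mul_of_nonneg_right hNp2P
          exact ENNReal.toReal_nonneg
  have he4 : Real.exp (2*r) * Real.exp (2*r) = Real.exp (4*r) := by
    rw [← Real.exp_add]; ring_nf
  have hA2 : 2 * Real.exp (4*r) * P^3 * gamma2 σ₂ q μ ≤ 1/2 := by
    rcases eq_or_lt_of_le (show (0:ℝ) ≤ 2 * Real.exp (4*r) * P^3 by positivity) with hA | hA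
    · rw [← hA, zero_mul]; norm_num
    · have h := mul_le_mul_of_nonneg_left hg2 (le_of_lt hA)
      calc 2 * Real.exp (4*r) * P^3 * gamma2 σ₂ q μ
          ≤ 2 * Real.exp (4*r) * P^3 * (1 / (2 * (2 * Real.exp (4*r) * P^3))) := h
        _ = 1/2 := by
            rw [mul_one_div, div_eq_iff (by linarith : (2 * (2 * Real.exp (4*r) * P^3)) ≠ 0)]
            ring
  have hA1 : 2 * Real.exp (4*r) * P^3 * gamma1 σ₁ q μ ≤ 1/2 := by
    rcases eq_or_lt_of_le (show (0:ℝ) ≤ 2 * Real.exp (4*r) * P^3 by positivity) with hA | hA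
    · rw [← hA, zero_mul]; norm_num
    · have h := mul_le_mul_of_nonneg_left hg1 (le_of_lt hA)
      calc 2 * Real.exp (4*r) * P^3 * gamma1 σ₁ q μ
          ≤ 2 * Real.exp (4*r) * P^3 * (1 / (2 * (2 * Real.exp (4*r) * P^3))) := h
        _ = 1/2 := by
            rw [mul_one_div, div_eq_iff (by linarith : (2 * (2 * Real.exp (4*r) * P^3)) ≠ 0)]
            ring
  have hQ1 : 2 * Real.exp (2*r) * Real.exp (2*r) * SS2 * SS1 * Hol1 ≤ 1/2 := by
    have s1 : SS2 * SS1 * Hol1 ≤ P * P * (P * gamma2 σ₂ q μ) :=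
      mul_le_mul (mul_le_mul hSS2P hSS1P hSS1nn hP0) hHolder1 hHol1nn
        (mul_nonneg hP0 hP0)
    calc 2 * Real.exp (2*r) * Real.exp (2*r) * SS2 * SS1 * Hol1
        = (2 * (Real.exp (2*r) * Real.exp (2*r))) * (SS2 * SS1 * Hol1) := by ring
      _ ≤ (2 * (Real.exp (2*r) * Real.exp (2*r))) * (P * P * (P * gamma2 σ₂ q μ)) :=
          mul_le_mul_of_nonneg_left s1 (by positivity)
      _ = 2 * Real.exp (4*r) * P^3 * gamma2 σ₂ q μ := by rw [he4]; ring
      _ ≤ 1/2 := hA2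
  have hQ2 : 2 * Real.exp (2*r) * Real.exp (2*r) * SS1 * SS2 * Hol2 ≤ 1/2 := by
    have s1 : SS1 * SS2 * Hol2 ≤ P * P * (P * gamma1 σ₁ q μ) :=
      mul_le_mul (mul_le_mul hSS1P hSS2P hSS2nn hP0) hHolder2 hHol2nn
        (mul_nonneg hP0 hP0)
    calc 2 * Real.exp (2*r) * Real.exp (2*r) * SS1 * SS2 * Hol2
        = (2 * (Real.exp (2*r) * Real.exp (2*r))) * (SS1 * SS2 * Hol2) := by ring
      _ ≤ (2 * (Real.exp (2*r) * Real.exp (2*r))) * (P * P * (P * gamma1 σ₁ q μ)) :=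
          mul_le_mul_of_nonneg_left s1 (by positivity)
      _ = 2 * Real.exp (4*r) * P^3 * gamma1 σ₁ q μ := by rw [he4]; ring
      _ ≤ 1/2 := hA1
  -- gammaT facts
  set G2 : ℝ := ∫ u in (0:ℝ)..1, ‖σ₁ u‖ * (gamma02 σ₂ μ u)^2 with hG2def
  set G1 : ℝ := ∫ u in (0:ℝ)..1, ‖σ₂ u‖ * (gamma01 σ₁ μ u)^2 with hG1def
  have hG2nn : 0 ≤ G2 := intervalIntegral.integral_nonneg zero_le_one
    (fun s _ => mul_nonneg (norm_nonneg _) (sq_nonneg _))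
  have hG1nn : 0 ≤ G1 := intervalIntegral.integral_nonneg zero_le_one
    (fun s _ => mul_nonneg (norm_nonneg _) (sq_nonneg _))
  have hgT : gammaT σ₁ σ₂ μ = G1 + G2 := rfl
  have hgT0 : 0 ≤ gammaT σ₁ σ₂ μ := by rw [hgT]; linarith
  have hG2le : G2 ≤ gammaT σ₁ σ₂ μ := by rw [hgT]; linarith
  have hG1le : G1 ≤ gammaT σ₁ σ₂ μ := by rw [hgT]; linarith
  -- assemble for K1
  have hκ1nn : 0 ≤ 2 * Real.exp (2*r) * SS1 * G2 := by positivity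
  obtain ⟨hsum1, hcont1, heq1, huniq1, hasym1⟩ :=
    Stmt6Aux.assembly (K1 σ₁ σ₂ μ) b (2 * Real.exp (2*r) * SS1 * G2) hb0 hκ1nn
      (fun z hz => Stmt6Aux.K1cont hi1 hi2 hz)
      (fun z C hz hC x hx => Stmt6Aux.K1bound hr hμ hi1 hi2 hz hC hx)
      (fun z C hz hC x hx => by
        have h := Stmt6Aux.K1sqBound hr hμ hi1 hi2 hz hC hx
        have hC0 : 0 ≤ C := le_trans (norm_nonneg _) (hC 0 ⟨le_rfl, zero_le_one⟩)
        calc ‖K1 σ₁ σ₂ μ (K1 σ₁ σ₂ μ z) x‖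
            ≤ 2 * Real.exp (2*r) * Real.exp (2*r) * C * SS2 * SS1 * Hol1 := h
          _ = (2 * Real.exp (2*r) * Real.exp (2*r) * SS2 * SS1 * Hol1) * C := by ring
          _ ≤ (1/2) * C := mul_le_mul_of_nonneg_right hQ1 hC0)
      (fun x hx => Stmt6Aux.K1sqE hr hμ hi1 hi2 hx)
      (fun z w c hz hw x hx => Stmt6Aux.K1add hi1 hi2 hz hw c hx)
      (fun w c hw x hx => Stmt6Aux.K1smul hi1 hi2 hw c hx)
      (fun z w h x hx => Stmt6Aux.K1congr σ₁ σ₂ μ z w h hx)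
  -- assemble for K2
  have hκ2nn : 0 ≤ 2 * Real.exp (2*r) * SS2 * G1 := by positivity
  obtain ⟨hsum2, hcont2, heq2, huniq2, hasym2⟩ :=
    Stmt6Aux.assembly (K2 σ₁ σ₂ μ) b (2 * Real.exp (2*r) * SS2 * G1) hb0 hκ2nn
      (fun z hz => Stmt6Aux.K2cont hi1 hi2 hz)
      (fun z C hz hC x hx => Stmt6Aux.K2bound hr hμ hi1 hi2 hz hC hx)
      (fun z C hz hC x hx => by
        have h := Stmt6Aux.K2sqBound hr hμ hi1 hi2 hz hC hx
        have hC0 : 0 ≤ C := le_trans (norm_nonneg _) (hC 0 ⟨le_rfl, zero_le_one⟩)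
        calc ‖K2 σ₁ σ₂ μ (K2 σ₁ σ₂ μ z) x‖
            ≤ 2 * Real.exp (2*r) * Real.exp (2*r) * C * SS1 * SS2 * Hol2 := h
          _ = (2 * Real.exp (2*r) * Real.exp (2*r) * SS1 * SS2 * Hol2) * C := by ring
          _ ≤ (1/2) * C := mul_le_mul_of_nonneg_right hQ2 hC0)
      (fun x hx => Stmt6Aux.K2sqE hr hμ hi1 hi2 hx)
      (fun z w c hz hw x hx => Stmt6Aux.K2add hi1 hi2 hz hw c hx)
      (fun w c hw x hx => Stmt6Aux.K2smul hi1 hi2 hw c hx)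
      (fun z w h x hx => Stmt6Aux.K2congr σ₁ σ₂ μ z w h hx)
  have hfinal : ∀ κG SSi : ℝ, 0 ≤ SSi → SSi ≤ SS1 + SS2 → 0 ≤ κG →
      κG ≤ gammaT σ₁ σ₂ μ →
      6 * max 1 b * (2 * Real.exp (2*r) * SSi * κG) ≤ cc * gammaT σ₁ σ₂ μ := by
    intro κG SSi hSSi hSSile hκG hκGle
    have h1 : 6 * max 1 b * (2 * Real.exp (2*r) * SSi * κG)
        = (6 * max 1 b * (2 * Real.exp (2*r) * SSi)) * κG := by ring
    have h2 : (6 * max 1 b * (2 * Real.exp (2*r) * SSi)) * κG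
        ≤ (6 * max 1 b * (2 * Real.exp (2*r) * (SS1 + SS2))) * gammaT σ₁ σ₂ μ := by
      refine mul_le_mul ?_ hκGle hκG
        (mul_nonneg (mul_nonneg (by norm_num) hmax0) (by positivity))
      apply mul_le_mul_of_nonneg_left _ (mul_nonneg (by norm_num) hmax0)
      apply mul_le_mul_of_nonneg_left hSSile (by positivity)
    have h3 : (6 * max 1 b * (2 * Real.exp (2*r) * (SS1 + SS2))) * gammaT σ₁ σ₂ μ
        ≤ cc * gammaT σ₁ σ₂ μ := by
      apply mul_le_mul_of_nonneg_right _ hgT0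
      rw [hccdef]; linarith
    rw [h1]; exact le_trans h2 h3
  refine ⟨hsum1, hsum2, hcont1, heq1, huniq1, ?_, hcont2, heq2, huniq2, ?_⟩
  · intro x hx
    calc ‖(∑' n : ℕ, (-1:ℂ)^n * ((K1 σ₁ σ₂ μ)^[n] eFun) x) - 1 + K1 σ₁ σ₂ μ eFun x‖
        ≤ 6 * max 1 b * (2 * Real.exp (2*r) * SS1 * G2) := hasym1 x hx
      _ ≤ cc * gammaT σ₁ σ₂ μ := hfinal G2 SS1 hSS1nn (by linarith) hG2nn hG2le
  · intro x hx
    calc ‖(∑' n : ℕ, (-1:ℂ)^n * ((K2 σ₁ σ₂ μ)^[n] eFun) x) - 1 + K2 σ₁ σ₂ μ eFun x‖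
        ≤ 6 * max 1 b * (2 * Real.exp (2*r) * SS2 * G1) := hasym2 x hx
      _ ≤ cc * gammaT σ₁ σ₂ μ := hfinal G1 SS2 hSS2nn (by linarith) hG1nn hG1le
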